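/- arXiv:2407.18315 — 4 statements merged into one kernel-verified Lean document; each statement's English description precedes it below -/
import Mathlib

section
/- Let 1 ≤ p < ∞ and let (X,d,μ) satisfy the standing assumptions and be of uniformly locally p-controlled geometry. Then X is uniformly locally quasiconvex: there exist R ∈ (0,∞] and C ≥ 1 such that for all x, y ∈ X with d(x,y) ≤ R there exists a (C·d(x,y))-Lipschitz map γ : [0,1] → X with γ(0) = x and γ(1) = y. -/
open MeasureTheory Metric Set Filter
open scoped ENNReal NNReal Topology

/-- `g` is an upper gradient of `u`: for every `L ≥ 0` and every `1`-Lipschitz curve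
`γ : [0,L] → X`, one has `|u(γ L) - u(γ 0)| ≤ ∫₀^L g(γ t) dt`. -/
def IsUpperGradient {X : Type*} [MetricSpace X] (g : X → ℝ≥0∞) (u : X → ℝ) : Prop :=
  ∀ (L : ℝ) (γ : ℝ → X), 0 ≤ L → LipschitzOnWith 1 γ (Set.Icc 0 L) →
    ENNReal.ofReal |u (γ L) - u (γ 0)| ≤ ∫⁻ t in Set.Icc 0 L, g (γ t)

/-- `(X,d,μ)` is of uniformly locally `p`-controlled geometry: there are `R₀ ∈ (0,∞]`,
`C_d ≥ 1`, `C, λ > 0` such that the measure is doubling and a `p`-Poincaré inequality holds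
at all scales `0 < r < R₀`. -/
def UniformlyLocallyControlledGeometry {X : Type*} [MetricSpace X] [MeasurableSpace X]
    (p : ℝ) (μ : Measure X) : Prop :=
  ∃ (R₀ : ℝ≥0∞) (Cd C lam : ℝ), 0 < R₀ ∧ 1 ≤ Cd ∧ 0 < C ∧ 0 < lam ∧
    (∀ (x : X) (r : ℝ), 0 < r → ENNReal.ofReal r < R₀ →
      μ (ball x (2 * r)) ≤ ENNReal.ofReal Cd * μ (ball x r)) ∧
    (∀ (u : X → ℝ) (g : X → ℝ≥0∞), LocallyIntegrable u μ → Measurable g →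
      IsUpperGradient g u → ∀ (x : X) (r : ℝ), 0 < r → ENNReal.ofReal r < R₀ →
      ENNReal.ofReal (⨍ y in ball x r, |u y - ⨍ z in ball x r, u z ∂μ| ∂μ) ≤
        ENNReal.ofReal (C * r) *
          ((∫⁻ y in ball x (lam * r), g y ^ p ∂μ) / μ (ball x (lam * r))) ^ (1 / p))

namespace St13

variable {X : Type*} [MetricSpace X]

/-- chain condition -/
def IsChain (ε : ℝ) (x y : X) (n : ℕ) (f : ℕ → X) : Prop :=
  f 0 = x ∧ f n = y ∧ ∀ i < n, dist (f i) (f (i+1)) ≤ ε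

def chainSums (ε : ℝ) (x y : X) : Set ℝ :=
  {s | ∃ n f, IsChain ε x y n f ∧ s = ∑ i ∈ Finset.range n, dist (f i) (f (i+1))}

noncomputable def chainDist (ε : ℝ) (x y : X) : ℝ := sInf (chainSums ε x y)

lemma chainSums_nonneg {ε : ℝ} {x y : X} {s : ℝ} (hs : s ∈ chainSums ε x y) : 0 ≤ s := by
  obtain ⟨n, f, -, rfl⟩ := hs
  exact Finset.sum_nonneg fun i _ => dist_nonneg

lemma chainSums_bddBelow (ε : ℝ) (x y : X) : BddBelow (chainSums ε x y) :=
  ⟨0, fun s hs => chainSums_nonneg hs⟩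

lemma self_mem_chainSums (ε : ℝ) (x : X) : (0:ℝ) ∈ chainSums ε x x :=
  ⟨0, fun _ => x, ⟨rfl, rfl, fun i hi => absurd hi (Nat.not_lt_zero i)⟩, by simp⟩

lemma dist_mem_chainSums {ε : ℝ} {x y : X} (h : dist x y ≤ ε) :
    dist x y ∈ chainSums ε x y := by
  refine ⟨1, fun i => if i = 0 then x else y, ⟨by simp, by simp, ?_⟩, by simp⟩
  intro i hi
  interval_cases i
  simpa using h

/-- concatenation -/
lemma add_mem_chainSums {ε : ℝ} {x y z : X} {s t : ℝ}
    (hs : s ∈ chainSums ε x y) (ht : t ∈ chainSums ε y z) : s + t ∈ chainSums ε x z := by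
  obtain ⟨n, f, ⟨hf0, hfn, hfs⟩, rfl⟩ := hs
  obtain ⟨m, g, ⟨hg0, hgm, hgs⟩, rfl⟩ := ht
  set h : ℕ → X := fun i => if i < n then f i else g (i - n) with hh
  have hle : ∀ i ≤ n, h i = f i := by
    intro i hi
    rcases lt_or_eq_of_le hi with hi2 | hi2
    · simp [hh, hi2]
    · subst hi2; simp [hh, hfn, hg0]
  have hge : ∀ i, n ≤ i → h i = g (i - n) := by
    intro i hi
    rcases lt_or_eq_of_le hi with hi2 | hi2
    · simp [hh, Nat.not_lt.mpr (le_of_lt hi2)]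
    · subst hi2; simp [hh, hfn, hg0]
  refine ⟨n + m, h, ⟨by rw [hle 0 (Nat.zero_le n), hf0],
    by rw [hge (n+m) (by omega)]; simpa using hgm, ?_⟩, ?_⟩
  · intro i hi
    by_cases h1 : i < n
    · rw [hle i (by omega), hle (i+1) (by omega)]
      exact hfs i h1
    · rw [hge i (by omega), hge (i+1) (by omega)]
      have h2 : i + 1 - n = (i - n) + 1 := by omega
      rw [h2]
      exact hgs (i - n) (by omega)
  · rw [Finset.sum_range_add]
    congr 1
    · exact Finset.sum_congr rfl fun i hi => by
        simp only [Finset.mem_range] at hi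
        rw [hle i (by omega), hle (i+1) (by omega)]
    · exact Finset.sum_congr rfl fun i hi => by
        rw [hge (n+i) (by omega), hge (n+i+1) (by omega)]
        congr 2 <;> omega

lemma chainSums_symm {ε : ℝ} {x y : X} {s : ℝ} (hs : s ∈ chainSums ε x y) :
    s ∈ chainSums ε y x := by
  obtain ⟨n, f, ⟨hf0, hfn, hfs⟩, rfl⟩ := hs
  refine ⟨n, fun i => f (n - i), ⟨by simp [hfn], by simp [hf0], ?_⟩, ?_⟩
  · intro i hi
    show dist (f (n - i)) (f (n - (i+1))) ≤ ε
    rw [dist_comm]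
    have h1 : n - i = (n - (i+1)) + 1 := by omega
    rw [h1]
    exact hfs _ (by omega)
  · rw [← Finset.sum_range_reflect]
    exact Finset.sum_congr rfl fun i hi => by
      simp only [Finset.mem_range] at hi
      rw [dist_comm]
      congr 2 <;> omega

variable [ConnectedSpace X]

lemma chainSums_nonempty {ε : ℝ} (hε : 0 < ε) (x y : X) : (chainSums ε x y).Nonempty := by
  have hclopen : IsClopen {z : X | (chainSums ε x z).Nonempty} := by
    constructor
    · rw [← isOpen_compl_iff, Metric.isOpen_iff]
      intro z hz
      refine ⟨ε, hε, fun w hw hwmem => ?_⟩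
      obtain ⟨s, hs⟩ := hwmem
      exact hz ⟨s + dist w z, add_mem_chainSums hs
        (dist_mem_chainSums (le_of_lt (by rwa [Metric.mem_ball] at hw)))⟩
    · rw [Metric.isOpen_iff]
      intro z hz
      refine ⟨ε, hε, fun w hw => ?_⟩
      obtain ⟨s, hs⟩ := hz
      exact ⟨s + dist z w, add_mem_chainSums hs
        (dist_mem_chainSums (le_of_lt (by rwa [Metric.mem_ball, dist_comm] at hw)))⟩
  have h2 := hclopen.eq_univ ⟨x, ⟨0, self_mem_chainSums ε x⟩⟩
  exact (h2 ▸ (Set.mem_univ y) : y ∈ {z : X | (chainSums ε x z).Nonempty})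

lemma chainDist_nonneg {ε : ℝ} (hε : 0 < ε) (x y : X) : 0 ≤ chainDist ε x y :=
  le_csInf (chainSums_nonempty hε x y) fun _ hs => chainSums_nonneg hs

lemma chainDist_le {ε : ℝ} {x y : X} {s : ℝ} (hs : s ∈ chainSums ε x y) :
    chainDist ε x y ≤ s := csInf_le (chainSums_bddBelow ε x y) hs

lemma chainDist_self {ε : ℝ} (hε : 0 < ε) (x : X) : chainDist ε x x = 0 :=
  le_antisymm (chainDist_le (self_mem_chainSums ε x)) (chainDist_nonneg hε x x)

lemma chainDist_triangle {ε : ℝ} (hε : 0 < ε) (x y z : X) :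
    chainDist ε x z ≤ chainDist ε x y + chainDist ε y z := by
  have h1 : ∀ s ∈ chainSums ε x y, chainDist ε x z - s ≤ chainDist ε y z := by
    intro s hs
    refine le_csInf (chainSums_nonempty hε y z) fun t ht => ?_
    have h2 := chainDist_le (add_mem_chainSums hs ht)
    linarith
  have h3 : chainDist ε x z - chainDist ε y z ≤ chainDist ε x y := by
    refine le_csInf (chainSums_nonempty hε x y) fun s hs => ?_
    have := h1 s hs
    linarith
  linarith

lemma chainDist_symm {ε : ℝ} (hε : 0 < ε) (x y : X) :
    chainDist ε x y = chainDist ε y x := by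
  apply le_antisymm <;>
  · apply le_csInf (chainSums_nonempty hε _ _)
    intro s hs
    exact chainDist_le (chainSums_symm hs)

lemma chainDist_le_dist {ε : ℝ} {x y : X} (h : dist x y ≤ ε) :
    chainDist ε x y ≤ dist x y := chainDist_le (dist_mem_chainSums h)

lemma abs_chainDist_sub_le {ε : ℝ} (hε : 0 < ε) (x₀ a b : X) (h : dist a b ≤ ε) :
    |chainDist ε x₀ a - chainDist ε x₀ b| ≤ dist a b := by
  rw [abs_sub_le_iff]
  constructor
  · have h1 := chainDist_triangle hε x₀ b a
    have h2 : chainDist ε b a ≤ dist a b := by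
      rw [dist_comm] at h ⊢
      exact chainDist_le_dist h
    linarith
  · have h1 := chainDist_triangle hε x₀ a b
    have h2 := chainDist_le_dist h
    linarith

lemma continuous_chainDist {ε : ℝ} (hε : 0 < ε) (x₀ : X) :
    Continuous (fun y => chainDist ε x₀ y) := by
  rw [Metric.continuous_iff]
  intro b δ hδ
  refine ⟨min ε δ, lt_min hε hδ, fun a ha => ?_⟩
  rw [Real.dist_eq]
  calc |chainDist ε x₀ a - chainDist ε x₀ b| ≤ dist a b :=
        abs_chainDist_sub_le hε x₀ a b (le_of_lt (lt_of_lt_of_le ha (min_le_left _ _)))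
    _ < δ := lt_of_lt_of_le ha (min_le_right _ _)

lemma chainDist_le_of_curve {ε L : ℝ} (hε : 0 < ε) (hL : 0 ≤ L) {γ : ℝ → X}
    (hγ : LipschitzOnWith 1 γ (Set.Icc 0 L)) : chainDist ε (γ 0) (γ L) ≤ L := by
  obtain ⟨n, hn1, hn2⟩ : ∃ n : ℕ, 0 < n ∧ L / n ≤ ε := by
    refine ⟨max 1 ⌈L / ε⌉₊, by positivity, ?_⟩
    rw [div_le_iff₀ (by positivity)]
    have h1 : L / ε ≤ (⌈L / ε⌉₊ : ℝ) := Nat.le_ceil _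
    have h2 : (⌈L / ε⌉₊ : ℝ) ≤ ((max 1 ⌈L / ε⌉₊ : ℕ) : ℝ) := by exact_mod_cast le_max_right 1 _
    rw [div_le_iff₀ hε] at h1
    nlinarith
  have hnR : (0:ℝ) < n := by exact_mod_cast hn1
  have hmem : ∀ i : ℕ, i ≤ n → L * i / n ∈ Set.Icc 0 L := by
    intro i hi
    have hiR : (i:ℝ) ≤ n := by exact_mod_cast hi
    constructor
    · positivity
    · rw [div_le_iff₀ hnR]; nlinarith
  have hdist : ∀ a ∈ Set.Icc (0:ℝ) L, ∀ b ∈ Set.Icc (0:ℝ) L, dist (γ a) (γ b) ≤ |a - b| := by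
    intro a ha b hb
    have := (lipschitzOnWith_iff_dist_le_mul.mp hγ) a ha b hb
    simpa [Real.dist_eq] using this
  have hstep : ∀ i : ℕ, i < n → dist (γ (L * i / n)) (γ (L * ((i+1 : ℕ) : ℝ) / n)) ≤ L / n := by
    intro i hi
    calc dist (γ (L * i / n)) (γ (L * ((i+1 : ℕ) : ℝ) / n))
        ≤ |L * i / n - L * ((i+1 : ℕ) : ℝ) / n| := hdist _ (hmem i (by omega)) _ (hmem (i+1) (by omega))
      _ = L / n := by
          push_cast
          rw [abs_sub_comm, abs_of_nonneg]
          · field_simp; ring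
          · rw [sub_nonneg, div_le_div_iff₀ hnR hnR]
            nlinarith
  set S : ℝ := ∑ i ∈ Finset.range n, dist (γ (L * (min i n) / n)) (γ (L * (min (i+1) n) / n)) with hS
  have key : S ∈ chainSums ε (γ 0) (γ L) := by
    refine ⟨n, fun i => γ (L * (min i n) / n), ⟨by simp, ?_, ?_⟩, rfl⟩
    · show γ (L * (min n n) / n) = γ L
      simp only [min_self]
      congr 1
      field_simp
    · intro i hi
      show dist (γ (L * (min i n) / n)) (γ (L * (min (i+1) n) / n)) ≤ ε
      rw [min_eq_left (by omega : i ≤ n), min_eq_left (by omega : i + 1 ≤ n)]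
      exact le_trans (hstep i hi) hn2
  have hSle : S ≤ L := by
    rw [hS]
    calc ∑ i ∈ Finset.range n, dist (γ (L * (min i n) / n)) (γ (L * (min (i+1) n) / n))
        ≤ ∑ i ∈ Finset.range n, L / n := by
          apply Finset.sum_le_sum
          intro i hi
          simp only [Finset.mem_range] at hi
          rw [min_eq_left (by omega : i ≤ n), min_eq_left (by omega : i + 1 ≤ n)]
          exact hstep i hi
      _ = L := by
          rw [Finset.sum_const, Finset.card_range, nsmul_eq_mul]
          field_simp
  exact le_trans (chainDist_le key) hSle


lemma abs_chainDist_sub_le_chainDist {ε : ℝ} (hε : 0 < ε) (x₀ a b : X) :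
    |chainDist ε x₀ a - chainDist ε x₀ b| ≤ chainDist ε b a := by
  rw [abs_sub_le_iff]
  constructor
  · linarith [chainDist_triangle hε x₀ b a]
  · rw [chainDist_symm hε b a]
    linarith [chainDist_triangle hε x₀ a b]

lemma isUpperGradient_one {ε : ℝ} (hε : 0 < ε) (x₀ : X) :
    IsUpperGradient (fun _ => (1 : ℝ≥0∞)) (chainDist ε x₀) := by
  intro L γ hL hγ
  rw [MeasureTheory.setLIntegral_one, Real.volume_Icc, sub_zero]
  apply ENNReal.ofReal_le_ofReal
  calc |chainDist ε x₀ (γ L) - chainDist ε x₀ (γ 0)| ≤ chainDist ε (γ 0) (γ L) :=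
        abs_chainDist_sub_le_chainDist hε x₀ (γ L) (γ 0)
    _ ≤ L := chainDist_le_of_curve hε hL hγ

/-- member of chainSums dominates dist -/
lemma dist_le_of_mem_chainSums {ε : ℝ} {x y : X} {s : ℝ} (hs : s ∈ chainSums ε x y) :
    dist x y ≤ s := by
  obtain ⟨n, f, ⟨hf0, hfn, _⟩, rfl⟩ := hs
  rw [← hf0, ← hfn]
  exact dist_le_range_sum_dist f n

open Classical in
/-- From a chain, build a step map `F : ℝ → X` on `[0,1]` that is `(S, ε)`-coarsely
Lipschitz, with `F 0 = x`, `F 1 = y`. -/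
lemma exists_step_map {ε : ℝ} (hε : 0 < ε) {x y : X} {s : ℝ} (hs : s ∈ chainSums ε x y)
    (hspos : 0 < s) :
    ∃ F : ℝ → X, F 0 = x ∧ F 1 = y ∧
      ∀ a b : ℝ, 0 ≤ a → a ≤ b → b ≤ 1 → dist (F a) (F b) ≤ s * (b - a) + ε := by
  obtain ⟨n, f, ⟨hf0, hfn, hfs⟩, hsum⟩ := hs
  set part : ℕ → ℝ := fun i => ∑ j ∈ Finset.range i, dist (f j) (f (j+1)) with hpart
  have hpartmono : Monotone part := by
    intro i j hij
    apply Finset.sum_le_sum_of_subset_of_nonneg (Finset.range_subset_range.mpr hij)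
    intro k _ _
    exact dist_nonneg
  have hpartn : part n = s := hsum.symm
  have hpart0 : part 0 = 0 := by simp [hpart]
  have hdistpart : ∀ i j, i ≤ j → j ≤ n → dist (f i) (f j) ≤ part j - part i := by
    intro i j hij hjn
    have h1 : dist (f i) (f (i + (j - i))) ≤
        ∑ k ∈ Finset.range (j - i), dist (f (i + k)) (f (i + k + 1)) :=
      dist_le_range_sum_dist (fun k => f (i + k)) (j - i)
    rw [show i + (j - i) = j by omega] at h1
    have h2 : ∑ k ∈ Finset.range (j - i), dist (f (i + k)) (f (i + k + 1)) =
        ∑ k ∈ Finset.Ico i j, dist (f k) (f (k+1)) := by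
      rw [Finset.sum_Ico_eq_sum_range]
    rw [h2, Finset.sum_Ico_eq_sub _ hij] at h1
    exact h1
  set G : ℝ → ℕ := fun t => Nat.findGreatest (fun i => part i ≤ s * t) n with hG
  refine ⟨fun t => f (G t), ?_, ?_, ?_⟩
  · show f (G 0) = x
    have h1 : part (G 0) ≤ s * 0 :=
      Nat.findGreatest_spec (P := fun i => part i ≤ s * 0) (Nat.zero_le n)
        (by show part 0 ≤ s * 0; rw [hpart0, mul_zero])
    have h2 : dist (f 0) (f (G 0)) ≤ part (G 0) - part 0 :=
      hdistpart 0 (G 0) (Nat.zero_le _) (Nat.findGreatest_le n)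
    have h3 : f 0 = f (G 0) := by
      rw [← dist_le_zero]
      rw [hpart0] at h2
      linarith
    rw [← h3, hf0]
  · show f (G 1) = y
    have h1 : G 1 = n := le_antisymm (Nat.findGreatest_le n)
      (Nat.le_findGreatest (le_refl n) (by rw [hpartn]; linarith))
    rw [h1, hfn]
  · intro a b ha hab hb1
    show dist (f (G a)) (f (G b)) ≤ s * (b - a) + ε
    have hGmono : G a ≤ G b := Nat.findGreatest_mono
      (fun i hi => le_trans hi (by nlinarith)) (le_refl n)
    have hGbn : G b ≤ n := Nat.findGreatest_le n
    have h1 : dist (f (G a)) (f (G b)) ≤ part (G b) - part (G a) :=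
      hdistpart _ _ hGmono hGbn
    have h2 : part (G b) ≤ s * b :=
      Nat.findGreatest_spec (P := fun i => part i ≤ s * b) (Nat.zero_le n)
        (by show part 0 ≤ s * b; rw [hpart0]; exact mul_nonneg hspos.le (ha.trans hab))
    have h3 : s * a - ε ≤ part (G a) := by
      rcases Nat.lt_or_ge (G a) n with hlt | hge
      · have h4 : ¬ (part (G a + 1) ≤ s * a) :=
          Nat.findGreatest_is_greatest (P := fun i => part i ≤ s * a) (Nat.lt_succ_self _) hlt
        push_neg at h4
        have h5 : part (G a + 1) - part (G a) ≤ ε := by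
          have : part (G a + 1) = part (G a) + dist (f (G a)) (f (G a + 1)) :=
            Finset.sum_range_succ _ (G a)
          rw [this]
          have := hfs (G a) hlt
          linarith
        linarith
      · have h6 : G a = n := le_antisymm (Nat.findGreatest_le n) hge
        rw [h6, hpartn]
        nlinarith
    linarith


omit [ConnectedSpace X] in
lemma exists_lipschitz_curve {x y : X} {L : ℝ} [ProperSpace X] (hL : 0 ≤ L)
    (h : ∀ δ : ℝ, 0 < δ → ∃ F : ℝ → X, F 0 = x ∧ F 1 = y ∧
      ∀ a b : ℝ, 0 ≤ a → a ≤ b → b ≤ 1 → dist (F a) (F b) ≤ L * (b - a) + δ) :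
    ∃ γ : ℝ → X, LipschitzOnWith (Real.toNNReal L) γ (Set.Icc 0 1) ∧ γ 0 = x ∧ γ 1 = y := by
  set K : Set X := closedBall x (L + 1) with hK
  have hKcompact : IsCompact K := isCompact_closedBall x (L + 1)
  haveI : CompactSpace K := isCompact_iff_compactSpace.mp hKcompact
  set I : Set ℝ := Set.Icc (0:ℝ) 1 with hI
  have h0I : (0:ℝ) ∈ I := ⟨le_refl 0, zero_le_one⟩
  have h1I : (1:ℝ) ∈ I := ⟨zero_le_one, le_refl 1⟩
  set T : ℕ → Set (I → K) := fun n =>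
    {f | (f ⟨0, h0I⟩ : X) = x ∧ (f ⟨1, h1I⟩ : X) = y ∧
      ∀ a b : I, (a:ℝ) ≤ b → dist (f a : X) (f b : X) ≤ L * ((b:ℝ) - a) + 1/(n+1)} with hT
  have hTclosed : ∀ n, IsClosed (T n) := by
    intro n
    have hTn : T n = {f : I → K | (f ⟨0, h0I⟩ : X) = x} ∩
        ({f : I → K | (f ⟨1, h1I⟩ : X) = y} ∩
          ⋂ (a : I), ⋂ (b : I), {f : I → K | (a:ℝ) ≤ b →
            dist (f a : X) (f b : X) ≤ L * ((b:ℝ) - a) + 1/(n+1)}) := by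
      ext f
      simp only [hT, Set.mem_setOf_eq, Set.mem_inter_iff, Set.mem_iInter]
    rw [hTn]
    apply IsClosed.inter
    · exact isClosed_eq (continuous_subtype_val.comp (continuous_apply _)) continuous_const
    apply IsClosed.inter
    · exact isClosed_eq (continuous_subtype_val.comp (continuous_apply _)) continuous_const
    refine isClosed_iInter fun a => isClosed_iInter fun b => ?_
    by_cases hab : (a:ℝ) ≤ b
    · simp only [hab, forall_true_left]
      exact isClosed_le (Continuous.dist
        (continuous_subtype_val.comp (continuous_apply a))
        (continuous_subtype_val.comp (continuous_apply b))) continuous_const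
    · simp only [hab, IsEmpty.forall_iff]
      exact isClosed_univ
  have hTnonempty : ∀ n : ℕ, (T n).Nonempty := by
    intro n
    have hδ : (0:ℝ) < min ((1:ℝ)/((n:ℝ)+1)) 1 := lt_min (by positivity) one_pos
    obtain ⟨F, hF0, hF1, hFlip⟩ := h _ hδ
    have hFK : ∀ t : I, F t ∈ K := by
      intro ⟨t, ht0, ht1⟩
      rw [hK, mem_closedBall, dist_comm, ← hF0]
      calc dist (F 0) (F t) ≤ L * (t - 0) + min ((1:ℝ)/((n:ℝ)+1)) 1 := hFlip 0 t (le_refl 0) ht0 ht1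
        _ ≤ L + 1 := by
            have := min_le_right (1/((n:ℝ)+1)) 1
            nlinarith
    refine ⟨fun t => ⟨F t, hFK t⟩, ?_, ?_, ?_⟩
    · exact hF0
    · exact hF1
    · intro a b hab
      calc dist (F a) (F b) ≤ L * ((b:ℝ) - a) + min ((1:ℝ)/((n:ℝ)+1)) 1 :=
            hFlip a b a.2.1 hab b.2.2
        _ ≤ L * ((b:ℝ) - a) + 1/(n+1) := by
            have := min_le_left (1/((n:ℝ)+1)) 1
            linarith
  have hTanti : ∀ m n : ℕ, m ≤ n → T n ⊆ T m := by
    intro m n hmn f hf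
    refine ⟨hf.1, hf.2.1, fun a b hab => le_trans (hf.2.2 a b hab) ?_⟩
    have hmnR : (m:ℝ) ≤ n := Nat.cast_le.mpr hmn
    have h1 : (1:ℝ)/((n:ℝ)+1) ≤ 1/((m:ℝ)+1) :=
      one_div_le_one_div_of_le (by positivity) (by linarith)
    linarith
  have hdir : Directed (fun (x1 x2 : Set (I → K)) => x1 ⊇ x2) T :=
    fun m n => ⟨max m n, hTanti m _ (le_max_left m n), hTanti n _ (le_max_right m n)⟩
  obtain ⟨f, hf⟩ := IsCompact.nonempty_iInter_of_directed_nonempty_isCompact_isClosed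
    T hdir hTnonempty (fun n => (hTclosed n).isCompact) hTclosed
  simp only [Set.mem_iInter] at hf
  have hf0 : (f ⟨0, h0I⟩ : X) = x := (hf 0).1
  have hf1 : (f ⟨1, h1I⟩ : X) = y := (hf 0).2.1
  have hflip : ∀ a b : I, (a:ℝ) ≤ b → dist (f a : X) (f b : X) ≤ L * ((b:ℝ) - a) := by
    intro a b hab
    refine le_of_forall_pos_le_add fun ε hε => ?_
    obtain ⟨n, hn⟩ := exists_nat_one_div_lt hε
    calc dist (f a : X) (f b : X) ≤ L * ((b:ℝ) - a) + 1/(n+1) := (hf n).2.2 a b hab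
      _ ≤ L * ((b:ℝ) - a) + ε := by push_cast at hn ⊢; linarith
  refine ⟨fun t => (f (Set.projIcc 0 1 zero_le_one t) : X), ?_, ?_, ?_⟩
  · rw [lipschitzOnWith_iff_dist_le_mul]
    intro s hs t ht
    rw [Set.projIcc_of_mem zero_le_one hs, Set.projIcc_of_mem zero_le_one ht]
    have hcoe : ((Real.toNNReal L : ℝ≥0) : ℝ) = L := Real.coe_toNNReal L hL
    rw [hcoe]
    rcases le_total s t with hst | hst
    · calc dist (f ⟨s, hs⟩ : X) (f ⟨t, ht⟩ : X) ≤ L * (t - s) := hflip ⟨s, hs⟩ ⟨t, ht⟩ hst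
        _ = L * dist s t := by rw [Real.dist_eq, abs_of_nonpos (by linarith), neg_sub]
    · rw [dist_comm]
      calc dist (f ⟨t, ht⟩ : X) (f ⟨s, hs⟩ : X) ≤ L * (s - t) := hflip ⟨t, ht⟩ ⟨s, hs⟩ hst
        _ = L * dist s t := by rw [Real.dist_eq, abs_of_nonneg (by linarith)]
  · show (f (Set.projIcc 0 1 zero_le_one 0) : X) = x
    rw [Set.projIcc_left]
    exact hf0
  · show (f (Set.projIcc 0 1 zero_le_one 1) : X) = y
    rw [Set.projIcc_right]
    exact hf1


omit [ConnectedSpace X] in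
lemma lipschitzOnWith_weaken {Y : Type*} [PseudoEMetricSpace Y] {K K2 : ℝ≥0} {f : X → Y}
    {t : Set X} (h : LipschitzOnWith K f t) (hK : K ≤ K2) : LipschitzOnWith K2 f t :=
  fun a ha b hb => le_trans (h ha hb) (mul_le_mul_left (ENNReal.coe_le_coe.mpr hK) _)

section Avg
variable {Ω : Type*} [MeasurableSpace Ω] (μ : Measure Ω)

lemma avg_sub_const {B : Set Ω} {u : Ω → ℝ} (hint : IntegrableOn u B μ) (h0 : μ B ≠ 0)
    (hfin : μ B ≠ ⊤) (c : ℝ) :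
    ⨍ w in B, (u w - c) ∂μ = (⨍ w in B, u w ∂μ) - c := by
  rw [setAverage_eq, setAverage_eq,
    integral_sub hint (integrableOn_const hfin), setIntegral_const,
    smul_sub, smul_smul, smul_eq_mul, smul_eq_mul, measureReal_def,
    inv_mul_cancel₀ (ENNReal.toReal_ne_zero.mpr ⟨h0, hfin⟩), one_mul]

lemma abs_avg_le {B : Set Ω} (f : Ω → ℝ) :
    |⨍ w in B, f w ∂μ| ≤ ⨍ w in B, |f w| ∂μ := by
  rw [setAverage_eq, setAverage_eq, smul_eq_mul, smul_eq_mul, abs_mul, measureReal_def,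
    abs_of_nonneg (inv_nonneg.mpr ENNReal.toReal_nonneg)]
  have h1 : |∫ w in B, f w ∂μ| ≤ ∫ w in B, |f w| ∂μ := by
    have := norm_integral_le_integral_norm (μ := μ.restrict B) f
    simpa [Real.norm_eq_abs] using this
  exact mul_le_mul_of_nonneg_left h1 (inv_nonneg.mpr ENNReal.toReal_nonneg)

lemma avg_nonneg' {B : Set Ω} {f : Ω → ℝ} (hB : MeasurableSet B) (h : ∀ w ∈ B, 0 ≤ f w) :
    0 ≤ ⨍ w in B, f w ∂μ := by
  rw [setAverage_eq, smul_eq_mul]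
  exact mul_nonneg (inv_nonneg.mpr ENNReal.toReal_nonneg)
    (setIntegral_nonneg hB h)

lemma avg_le_const {B : Set Ω} {f : Ω → ℝ} (hB : MeasurableSet B) (hint : IntegrableOn f B μ)
    (hfin : μ B ≠ ⊤) {m : ℝ} (hm : 0 ≤ m) (h : ∀ w ∈ B, f w ≤ m) :
    ⨍ w in B, f w ∂μ ≤ m := by
  rw [setAverage_eq, smul_eq_mul]
  have h1 : ∫ w in B, f w ∂μ ≤ ∫ _ in B, m ∂μ :=
    setIntegral_mono_on hint (integrableOn_const hfin) hB h
  rw [setIntegral_const, smul_eq_mul] at h1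
  rcases eq_or_ne ((μ B).toReal) 0 with hz | hz
  · rw [measureReal_def, hz]; simpa using hm
  · calc ((μ B).toReal)⁻¹ * ∫ w in B, f w ∂μ ≤ ((μ B).toReal)⁻¹ * ((μ B).toReal * m) :=
        mul_le_mul_of_nonneg_left h1 (inv_nonneg.mpr ENNReal.toReal_nonneg)
      _ = m := by field_simp

/-- Key comparison of averages over nested sets. -/
lemma avg_diff_bound {u : Ω → ℝ} {B B' : Set Ω} (hB : MeasurableSet B)
    (hsub : B' ⊆ B) (hint : IntegrableOn u B μ) (h0' : μ B' ≠ 0) (hfin : μ B ≠ ⊤)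
    {K m : ℝ} (hK : 0 ≤ K) (hμ : μ B ≤ ENNReal.ofReal K * μ B')
    (havg : ⨍ w in B, |u w - ⨍ z in B, u z ∂μ| ∂μ ≤ m) (hm : 0 ≤ m) :
    |(⨍ w in B', u w ∂μ) - ⨍ w in B, u w ∂μ| ≤ K * m := by
  set c := ⨍ z in B, u z ∂μ with hc
  have hfin' : μ B' ≠ ⊤ := (lt_of_le_of_lt (measure_mono hsub) hfin.lt_top).ne
  have h0 : μ B ≠ 0 := fun h => h0' (le_antisymm (h ▸ measure_mono hsub) zero_le)
  have hint' : IntegrableOn u B' μ := hint.mono_set hsub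
  have habs : IntegrableOn (fun w => |u w - c|) B μ :=
    (hint.sub (integrableOn_const hfin)).abs
  have step1 : (⨍ w in B', u w ∂μ) - c = ⨍ w in B', (u w - c) ∂μ :=
    (avg_sub_const μ hint' h0' hfin' c).symm
  have step2 : |⨍ w in B', (u w - c) ∂μ| ≤ ⨍ w in B', |u w - c| ∂μ :=
    abs_avg_le μ _
  have hBz : (μ B).toReal ≠ 0 := ENNReal.toReal_ne_zero.mpr ⟨h0, hfin⟩
  have step3 : ⨍ w in B', |u w - c| ∂μ ≤
      ((μ B').toReal)⁻¹ * ∫ w in B, |u w - c| ∂μ := by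
    rw [setAverage_eq, smul_eq_mul]
    have hmono : ∫ w in B', |u w - c| ∂μ ≤ ∫ w in B, |u w - c| ∂μ :=
      setIntegral_mono_set habs (Filter.Eventually.of_forall fun w => abs_nonneg _)
        (HasSubset.Subset.eventuallyLE hsub)
    exact mul_le_mul_of_nonneg_left hmono (inv_nonneg.mpr ENNReal.toReal_nonneg)
  have step4 : (μ B).toReal / (μ B').toReal ≤ K := by
    have h1 : (μ B).toReal ≤ K * (μ B').toReal := by
      have h2 := ENNReal.toReal_mono (by
        exact ENNReal.mul_ne_top ENNReal.ofReal_ne_top hfin') hμ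
      rwa [ENNReal.toReal_mul, ENNReal.toReal_ofReal hK] at h2
    rw [div_le_iff₀ (ENNReal.toReal_pos h0' hfin')]
    linarith
  have havgnn : 0 ≤ ⨍ w in B, |u w - c| ∂μ :=
    avg_nonneg' μ hB fun w _ => abs_nonneg _
  have hratio : 0 ≤ (μ B).toReal / (μ B').toReal := by positivity
  have hIeq : ∫ w in B, |u w - c| ∂μ = (μ B).toReal * ⨍ w in B, |u w - c| ∂μ := by
    rw [setAverage_eq, smul_eq_mul, ← mul_assoc, measureReal_def, mul_inv_cancel₀ hBz, one_mul]
  calc |(⨍ w in B', u w ∂μ) - c| = |⨍ w in B', (u w - c) ∂μ| := by rw [step1]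
    _ ≤ ⨍ w in B', |u w - c| ∂μ := step2
    _ ≤ ((μ B').toReal)⁻¹ * ∫ w in B, |u w - c| ∂μ := step3
    _ = ((μ B').toReal)⁻¹ * ((μ B).toReal * ⨍ w in B, |u w - c| ∂μ) := by rw [hIeq]
    _ ≤ ((μ B').toReal)⁻¹ * ((μ B).toReal * m) := by
        apply mul_le_mul_of_nonneg_left _ (inv_nonneg.mpr ENNReal.toReal_nonneg)
        exact mul_le_mul_of_nonneg_left havg ENNReal.toReal_nonneg
    _ = (μ B).toReal / (μ B').toReal * m := by ring
    _ ≤ K * m := mul_le_mul_of_nonneg_right step4 hm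

end Avg

end St13

open St13

/-- under the standing assumptions, a space of uniformly locally `p`-controlled
geometry is uniformly locally quasiconvex: there are `R ∈ (0,∞]` and `C ≥ 1` such that any
two points at distance at most `R` are joined by a `(C·d(x,y))`-Lipschitz curve
`γ : [0,1] → X`. -/
theorem statement13 {X : Type*} [MetricSpace X] [MeasurableSpace X] [BorelSpace X]
    [ProperSpace X] [ConnectedSpace X]
    (μ : Measure X) (hXinf : μ Set.univ = ⊤)
    (hball : ∀ (x : X) (r : ℝ), 0 < r → 0 < μ (ball x r) ∧ μ (ball x r) < ⊤)
    (p : ℝ) (hp : 1 ≤ p)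
    (hgeom : UniformlyLocallyControlledGeometry p μ) :
    ∃ (R : ℝ≥0∞) (C : ℝ), 0 < R ∧ 1 ≤ C ∧
      ∀ x y : X, ENNReal.ofReal (dist x y) ≤ R →
        ∃ γ : ℝ → X, LipschitzOnWith (Real.toNNReal (C * dist x y)) γ (Set.Icc 0 1) ∧
          γ 0 = x ∧ γ 1 = y := by
  classical
  obtain ⟨R₀, Cd, C, lam, hR₀, hCd, hC, hlam, hdbl, hPI⟩ := hgeom
  haveI : IsLocallyFiniteMeasure μ :=
    ⟨fun z => ⟨ball z 1, ball_mem_nhds z one_pos, (hball z 1 one_pos).2⟩⟩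
  set r₀ : ℝ := (min R₀ 1).toReal with hr₀
  have hminne : min R₀ 1 ≠ ⊤ := ne_top_of_le_ne_top ENNReal.one_ne_top (min_le_right _ _)
  have hr₀pos : 0 < r₀ := ENNReal.toReal_pos (lt_min hR₀ zero_lt_one).ne' hminne
  have hscale : ∀ r : ℝ, 0 < r → r < r₀ → ENNReal.ofReal r < R₀ := by
    intro r hr hrr
    have h1 : ENNReal.ofReal r < ENNReal.ofReal r₀ := (ENNReal.ofReal_lt_ofReal_iff hr₀pos).mpr hrr
    rw [hr₀, ENNReal.ofReal_toReal hminne] at h1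
    exact lt_of_lt_of_le h1 (min_le_left _ _)
  have hCd0 : (0:ℝ) ≤ Cd := by linarith
  set K₁ : ℝ := 8 * Cd^2 * C with hK₁
  have hK₁pos : 0 < K₁ := by positivity
  -- integrability of chain-distance functions on balls
  have hInt : ∀ (ε : ℝ), 0 < ε → ∀ (x₀ z : X) (r : ℝ),
      IntegrableOn (fun w => chainDist ε x₀ w) (ball z r) μ := by
    intro ε hε x₀ z r
    exact ((continuous_chainDist hε x₀).locallyIntegrable.integrableOn_isCompact
      (isCompact_closedBall z r)).mono_set ball_subset_closedBall
  -- Poincaré inequality specialized to chain distances with g = 1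
  have hPoin : ∀ (ε : ℝ), 0 < ε → ∀ (x₀ z : X) (r : ℝ), 0 < r → r < r₀ →
      ⨍ w in ball z r, |chainDist ε x₀ w - ⨍ v in ball z r, chainDist ε x₀ v ∂μ| ∂μ ≤ C * r := by
    intro ε hε x₀ z r hr hrr
    have hloc : LocallyIntegrable (fun w => chainDist ε x₀ w) μ :=
      (continuous_chainDist hε x₀).locallyIntegrable
    have hug : IsUpperGradient (fun _ => (1:ℝ≥0∞)) (fun w => chainDist ε x₀ w) :=
      isUpperGradient_one hε x₀
    have h1 := hPI _ _ hloc measurable_const hug z r hr (hscale r hr hrr)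
    have hμpos := (hball z (lam * r) (by positivity)).1
    have hμfin := (hball z (lam * r) (by positivity)).2
    have hrhs : ((∫⁻ w in ball z (lam*r), (1:ℝ≥0∞)^p ∂μ) / μ (ball z (lam*r)))^(1/p)
        = 1 := by
      simp only [ENNReal.one_rpow, MeasureTheory.setLIntegral_one]
      rw [ENNReal.div_self hμpos.ne' hμfin.ne]
      exact ENNReal.one_rpow _
    rw [hrhs, mul_one] at h1
    exact (ENNReal.ofReal_le_ofReal_iff (by positivity)).mp h1
  have hdbl2 : ∀ (z : X) (r : ℝ), 0 < r → r < r₀ →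
      μ (ball z (2*r)) ≤ ENNReal.ofReal Cd * μ (ball z r) := fun z r hr hrr =>
    hdbl z r hr (hscale r hr hrr)
  -- convergence of ball averages to the value at the center
  have htend : ∀ (ε : ℝ) (hε : 0 < ε) (x₀ z : X) (d : ℝ), 0 < d →
      Filter.Tendsto (fun N : ℕ => ⨍ w in ball z (d/2^N), chainDist ε x₀ w ∂μ) atTop
        (𝓝 (chainDist ε x₀ z)) := by
    intro ε hε x₀ z d hd
    rw [Metric.tendsto_atTop]
    intro η hη
    obtain ⟨δ, hδpos, hδ⟩ := Metric.continuous_iff.mp (continuous_chainDist hε x₀) z (η/2)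
      (half_pos hη)
    have h2 : Filter.Tendsto (fun N : ℕ => d / 2^N) atTop (𝓝 0) := by
      have h3 : Filter.Tendsto (fun N : ℕ => ((1:ℝ)/2)^N) atTop (𝓝 0) :=
        tendsto_pow_atTop_nhds_zero_of_lt_one (by norm_num) (by norm_num)
      have h4 := h3.const_mul d
      rw [mul_zero] at h4
      convert h4 using 2 with N
      rw [div_pow, one_pow]
      ring
    have h5 : ∀ᶠ N : ℕ in atTop, d / 2^N < δ := h2.eventually (gt_mem_nhds hδpos)
    obtain ⟨N₀, hN₀⟩ := h5.exists_forall_of_atTop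
    refine ⟨N₀, fun N hN => ?_⟩
    set r := d / 2^N with hr
    have hrpos : 0 < r := by positivity
    have hrδ : r < δ := hN₀ N hN
    have hμ0 := (hball z r hrpos).1.ne'
    have hμfin := (hball z r hrpos).2.ne
    have hint := hInt ε hε x₀ z r
    rw [Real.dist_eq]
    have heq : (⨍ w in ball z r, chainDist ε x₀ w ∂μ) - chainDist ε x₀ z =
        ⨍ w in ball z r, (chainDist ε x₀ w - chainDist ε x₀ z) ∂μ :=
      (avg_sub_const μ hint hμ0 hμfin _).symm
    rw [heq]
    calc |⨍ w in ball z r, (chainDist ε x₀ w - chainDist ε x₀ z) ∂μ|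
        ≤ ⨍ w in ball z r, |chainDist ε x₀ w - chainDist ε x₀ z| ∂μ := abs_avg_le μ _
      _ ≤ η/2 := by
          apply avg_le_const μ measurableSet_ball
            ((hint.sub (integrableOn_const (hball z r hrpos).2.ne)).abs)
            hμfin (by linarith)
          intro w hw
          show |chainDist ε x₀ w - chainDist ε x₀ z| ≤ η / 2
          have h6 : dist w z < δ := lt_trans (mem_ball.mp hw) hrδ
          have h7 := hδ w h6
          rw [Real.dist_eq] at h7
          linarith
      _ < η := by linarith
  -- the main chain estimate
  have key : ∀ (ε : ℝ), 0 < ε → ∀ x y : X, 0 < dist x y → dist x y < r₀/4 →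
      chainDist ε x y ≤ K₁ * dist x y := by
    intro ε hε x y hd hdr
    set d := dist x y with hdd
    set u : X → ℝ := fun w => chainDist ε x w with hu
    set a : ℕ → ℝ := fun i => ⨍ w in ball x (d/2^i), u w ∂μ with ha
    set b : ℕ → ℝ := fun i => ⨍ w in ball y (d/2^i), u w ∂μ with hb
    have hrad : ∀ i : ℕ, 0 < d/2^i := fun i => by positivity
    have hradlt : ∀ i : ℕ, d/2^i < r₀ := by
      intro i
      have h6 : d/2^i ≤ d := div_le_self hd.le (one_le_pow₀ (by norm_num : (1:ℝ) ≤ 2))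
      linarith
    have hhalf : ∀ i : ℕ, 2 * (d/2^(i+1)) = d/2^i := by
      intro i
      rw [pow_succ]
      field_simp
    -- the single telescoping step
    have hstep : ∀ (z : X) (i : ℕ), |(⨍ w in ball z (d/2^(i+1)), u w ∂μ) -
        ⨍ w in ball z (d/2^i), u w ∂μ| ≤ Cd * (C * (d/2^i)) := by
      intro z i
      apply avg_diff_bound μ measurableSet_ball
        (ball_subset_ball (by linarith [hhalf i, hrad (i+1)] : d/2^(i+1) ≤ d/2^i))
        (hInt ε hε x z (d/2^i)) (hball z (d/2^(i+1)) (hrad (i+1))).1.ne'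
        (hball z (d/2^i) (hrad i)).2.ne hCd0 ?_ (hPoin ε hε x z (d/2^i) (hrad i) (hradlt i))
        (by positivity)
      have h7 := hdbl2 z (d/2^(i+1)) (hrad (i+1)) (lt_trans (by linarith [hhalf i, hrad (i+1)]) (hradlt i))
      rwa [hhalf i] at h7
    -- telescoping sums
    have htele : ∀ (z : X) (N : ℕ), |(⨍ w in ball z (d/2^N), u w ∂μ) -
        ⨍ w in ball z (d/2^0), u w ∂μ| ≤ 2 * (Cd * C * d) := by
      intro z N
      set c : ℕ → ℝ := fun i => ⨍ w in ball z (d/2^i), u w ∂μ with hcdef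
      have h8 : dist (c 0) (c N) ≤ ∑ i ∈ Finset.range N, dist (c i) (c (i+1)) :=
        dist_le_range_sum_dist c N
      have h9 : ∑ i ∈ Finset.range N, dist (c i) (c (i+1)) ≤
          ∑ i ∈ Finset.range N, (Cd * C * d) * (1/2)^i := by
        apply Finset.sum_le_sum
        intro i _
        rw [Real.dist_eq, abs_sub_comm]
        calc |c (i+1) - c i| ≤ Cd * (C * (d/2^i)) := hstep z i
          _ = (Cd * C * d) * (1/2)^i := by
              rw [div_pow, one_pow]
              field_simp
      have h10 : ∑ i ∈ Finset.range N, (Cd * C * d) * (1/2)^i ≤ (Cd * C * d) * 2 := by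
        rw [← Finset.mul_sum]
        apply mul_le_mul_of_nonneg_left _ (by positivity)
        exact sum_geometric_two_le N
      have h11 : |c N - c 0| = dist (c 0) (c N) := by
        rw [Real.dist_eq, abs_sub_comm]
      rw [show (⨍ w in ball z (d/2^N), u w ∂μ) = c N from rfl,
        show (⨍ w in ball z (d/2^0), u w ∂μ) = c 0 from rfl, h11]
      linarith
    -- bridges
    have hsubxy : ball y d ⊆ ball x (2*d) := by
      intro w hw
      rw [mem_ball] at hw ⊢
      have := dist_triangle w y x
      rw [dist_comm y x, ← hdd] at this
      linarith
    have hbridge1 : |(⨍ w in ball x d, u w ∂μ) - ⨍ w in ball x (2*d), u w ∂μ| ≤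
        Cd * (C * (2*d)) := by
      apply avg_diff_bound μ measurableSet_ball (ball_subset_ball (by linarith))
        (hInt ε hε x x (2*d)) (hball x d hd).1.ne' (hball x (2*d) (by linarith)).2.ne
        hCd0 (hdbl2 x d hd (by linarith)) (hPoin ε hε x x (2*d) (by linarith) (by linarith))
        (by positivity)
    have hbridge2 : |(⨍ w in ball y d, u w ∂μ) - ⨍ w in ball x (2*d), u w ∂μ| ≤
        (Cd^2) * (C * (2*d)) := by
      apply avg_diff_bound μ measurableSet_ball hsubxy
        (hInt ε hε x x (2*d)) (hball y d hd).1.ne' (hball x (2*d) (by linarith)).2.ne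
        (by positivity) ?_ (hPoin ε hε x x (2*d) (by linarith) (by linarith))
        (by positivity)
      have hsub2 : ball x (2*d) ⊆ ball y (2*(2*d)) := by
        intro w hw
        rw [mem_ball] at hw ⊢
        have := dist_triangle w x y
        rw [← hdd] at this
        linarith
      calc μ (ball x (2*d)) ≤ μ (ball y (2*(2*d))) := measure_mono hsub2
        _ ≤ ENNReal.ofReal Cd * μ (ball y (2*d)) := hdbl2 y (2*d) (by linarith) (by linarith)
        _ ≤ ENNReal.ofReal Cd * (ENNReal.ofReal Cd * μ (ball y d)) :=
            mul_le_mul_right (hdbl2 y d hd (by linarith)) _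
        _ = ENNReal.ofReal (Cd^2) * μ (ball y d) := by
            rw [← mul_assoc, ← ENNReal.ofReal_mul hCd0, sq]
    -- combine
    have hbound : ∀ N : ℕ, |a N - b N| ≤ K₁ * d := by
      intro N
      have t1 := htele x N
      have t2 := htele y N
      have h12 : |a N - b N| ≤ |a N - a 0| + |a 0 - (⨍ w in ball x (2*d), u w ∂μ)| +
          |(⨍ w in ball y d, u w ∂μ) - (⨍ w in ball x (2*d), u w ∂μ)| + |b 0 - b N| := by
        have e1 : a 0 = ⨍ w in ball x d, u w ∂μ := by
          rw [ha]; norm_num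
        have e2 : b 0 = ⨍ w in ball y d, u w ∂μ := by
          rw [hb]; norm_num
        rw [e2]
        have := abs_sub_le (a N) (a 0) (b N)
        have h13 := abs_sub_le (a 0) (⨍ w in ball y d, u w ∂μ) (b N)
        have h14 := abs_sub_le (a 0) (⨍ w in ball x (2*d), u w ∂μ) (⨍ w in ball y d, u w ∂μ)
        have h15 : |(⨍ w in ball x (2*d), u w ∂μ) - ⨍ w in ball y d, u w ∂μ| =
            |(⨍ w in ball y d, u w ∂μ) - ⨍ w in ball x (2*d), u w ∂μ| := abs_sub_comm _ _
        have h16 : |(⨍ w in ball y d, u w ∂μ) - b N| = |b N - ⨍ w in ball y d, u w ∂μ| :=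
          abs_sub_comm _ _
        rw [← e2] at *
        calc |a N - b N| ≤ |a N - a 0| + |a 0 - b N| := abs_sub_le _ _ _
          _ ≤ |a N - a 0| + (|a 0 - b 0| + |b 0 - b N|) := by
              have := abs_sub_le (a 0) (b 0) (b N)
              linarith
          _ ≤ |a N - a 0| + ((|a 0 - (⨍ w in ball x (2*d), u w ∂μ)| +
                |(⨍ w in ball x (2*d), u w ∂μ) - b 0|) + |b 0 - b N|) := by
              have := abs_sub_le (a 0) (⨍ w in ball x (2*d), u w ∂μ) (b 0)
              linarith
          _ = _ := by
              rw [e2, abs_sub_comm (⨍ w in ball x (2*d), u w ∂μ)]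
              ring
      have e1 : a 0 = ⨍ w in ball x (d/2^0), u w ∂μ := rfl
      have e2 : b 0 = ⨍ w in ball y (d/2^0), u w ∂μ := rfl
      have e3 : a 0 = ⨍ w in ball x d, u w ∂μ := by rw [ha]; norm_num
      have hb1' : |a 0 - (⨍ w in ball x (2*d), u w ∂μ)| ≤ Cd * (C * (2*d)) := by
        rw [e3]; exact hbridge1
      have t1' : |a N - a 0| ≤ 2 * (Cd * C * d) := t1
      have t2' : |b 0 - b N| ≤ 2 * (Cd * C * d) := by
        rw [abs_sub_comm]; exact t2
      have hCd1 : (1:ℝ) ≤ Cd := hCd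
      calc |a N - b N| ≤ 2*(Cd*C*d) + Cd*(C*(2*d)) + Cd^2*(C*(2*d)) + 2*(Cd*C*d) := by
            linarith [hbridge2, h12, hb1', t1', t2']
        _ ≤ K₁ * d := by
            have h7 : 0 ≤ (Cd - 1) * Cd * (C * d) :=
              mul_nonneg (mul_nonneg (sub_nonneg.mpr hCd1) hCd0) (mul_nonneg hC.le hd.le)
            rw [hK₁]
            nlinarith [h7]
    have htendA := htend ε hε x x d hd
    have htendB := htend ε hε x y d hd
    have htendAB : Filter.Tendsto (fun N => |a N - b N|) atTop
        (𝓝 |chainDist ε x x - chainDist ε x y|) := (htendA.sub htendB).abs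
    have hfinal : |chainDist ε x x - chainDist ε x y| ≤ K₁ * d :=
      le_of_tendsto htendAB (Filter.Eventually.of_forall hbound)
    rw [chainDist_self hε x, zero_sub, abs_neg,
      abs_of_nonneg (chainDist_nonneg hε x y)] at hfinal
    exact hfinal
  -- conclusion
  refine ⟨ENNReal.ofReal (r₀/16), max 1 K₁, ENNReal.ofReal_pos.mpr (by positivity),
    le_max_left 1 K₁, ?_⟩
  intro x y hdist
  have hd16 : dist x y ≤ r₀/16 :=
    (ENNReal.ofReal_le_ofReal_iff (by positivity)).mp hdist
  rcases eq_or_lt_of_le (dist_nonneg : (0:ℝ) ≤ dist x y) with hd0 | hdpos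
  · have hxy : x = y := by rwa [eq_comm, dist_eq_zero] at hd0
    exact ⟨fun _ => x, ((LipschitzWith.const x).weaken zero_le).lipschitzOnWith,
      rfl, hxy⟩
  · have hchain : ∀ ε : ℝ, 0 < ε → chainDist ε x y ≤ K₁ * dist x y := fun ε hε =>
      key ε hε x y hdpos (by linarith)
    have hcoarse : ∀ δ : ℝ, 0 < δ → ∃ F : ℝ → X, F 0 = x ∧ F 1 = y ∧
        ∀ a b : ℝ, 0 ≤ a → a ≤ b → b ≤ 1 →
          dist (F a) (F b) ≤ (K₁ * dist x y) * (b - a) + δ := by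
      intro δ hδ
      obtain ⟨s, hsmem, hslt⟩ := Real.lt_sInf_add_pos
        (chainSums_nonempty (half_pos hδ) x y) (half_pos hδ)
      have hspos : 0 < s := lt_of_lt_of_le hdpos (dist_le_of_mem_chainSums hsmem)
      obtain ⟨F, hF0, hF1, hFlip⟩ := exists_step_map (half_pos hδ) hsmem hspos
      refine ⟨F, hF0, hF1, fun a b hA hab hb1 => ?_⟩
      have hs2 : s ≤ K₁ * dist x y + δ/2 := by
        have := hchain (δ/2) (half_pos hδ)
        have h17 : sInf (chainSums (δ/2) x y) = chainDist (δ/2) x y := rfl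
        rw [h17] at hslt
        linarith
      calc dist (F a) (F b) ≤ s * (b - a) + δ/2 := hFlip a b hA hab hb1
        _ ≤ (K₁ * dist x y) * (b - a) + δ := by
            nlinarith [sub_nonneg.mpr hab, (by linarith : b - a ≤ 1)]
    obtain ⟨γ, hγlip, hγ0, hγ1⟩ := exists_lipschitz_curve
      (by positivity : (0:ℝ) ≤ K₁ * dist x y) hcoarse
    refine ⟨γ, lipschitzOnWith_weaken hγlip ?_, hγ0, hγ1⟩
    apply Real.toNNReal_mono
    have h18 : K₁ ≤ max 1 K₁ := le_max_right 1 K₁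
    nlinarith [hdpos.le]
end

section
/- Let (X,d) be a proper, connected, unbounded metric space that is uniformly locally quasiconvex with constants R ∈ (0,∞) and C ≥ 1. Then for every x₀ ∈ X and every r > 0, only finitely many connected components of X ∖ B(x₀,r) have nonempty intersection with X ∖ B(x₀, r + 2CR). -/
open MeasureTheory Metric Set Filter
open scoped ENNReal NNReal Topology

/-- Auxiliary: a connected component within a closed set is closed. -/
lemma aux_closed_ccIn {X : Type*} [TopologicalSpace X] {F : Set X} (hF : IsClosed F) (x : X) :
    IsClosed (connectedComponentIn F x) := by
  by_cases hx : x ∈ F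
  · rw [connectedComponentIn_eq_image hx]
    exact hF.isClosedEmbedding_subtypeVal.isClosedMap _ isClosed_connectedComponent
  · rw [connectedComponentIn_eq_empty hx]
    exact isClosed_empty

/-- Auxiliary: if `y` is far enough from `x₀` and `z` is close to `y`, then the quasiconvexity
curve from `y` to `z` stays outside `ball x₀ r`, so `z` lies in the connected component of `y`. -/
lemma aux_same_comp {X : Type*} [MetricSpace X]
    {R C : ℝ} (hC : 1 ≤ C)
    (hqc : ∀ x y : X, dist x y ≤ R →
      ∃ γ : ℝ → X, LipschitzOnWith (Real.toNNReal (C * dist x y)) γ (Set.Icc 0 1) ∧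
        γ 0 = x ∧ γ 1 = y)
    {x₀ y z : X} {r : ℝ} (hyz : dist y z ≤ R)
    (hfar : r + C * dist y z ≤ dist x₀ y) :
    z ∈ connectedComponentIn (ball x₀ r)ᶜ y := by
  obtain ⟨γ, hlip, h0, h1⟩ := hqc y z hyz
  have hCd : (0 : ℝ) ≤ C * dist y z := mul_nonneg (by linarith) dist_nonneg
  have hsub : γ '' Icc (0 : ℝ) 1 ⊆ (ball x₀ r)ᶜ := by
    rintro _ ⟨t, ht, rfl⟩
    have hdt : dist (γ t) y ≤ C * dist y z := by
      have h := hlip.dist_le_mul t ht 0 ⟨le_refl 0, zero_le_one⟩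
      rw [h0] at h
      have h2 : dist t (0 : ℝ) ≤ 1 := by
        rw [Real.dist_eq, sub_zero, abs_of_nonneg ht.1]; exact ht.2
      calc dist (γ t) y ≤ (Real.toNNReal (C * dist y z) : ℝ) * dist t 0 := h
        _ ≤ (Real.toNNReal (C * dist y z) : ℝ) * 1 := by
            exact mul_le_mul_of_nonneg_left h2 (by positivity)
        _ = C * dist y z := by rw [mul_one, Real.coe_toNNReal _ hCd]
    simp only [mem_compl_iff, mem_ball, not_lt]
    have htri : dist x₀ y ≤ dist x₀ (γ t) + dist (γ t) y := dist_triangle _ _ _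
    have : dist x₀ (γ t) = dist (γ t) x₀ := dist_comm _ _
    linarith
  have hconn : IsPreconnected (γ '' Icc (0 : ℝ) 1) :=
    isPreconnected_Icc.image γ hlip.continuousOn
  have hy : y ∈ γ '' Icc (0 : ℝ) 1 := ⟨0, ⟨le_refl 0, zero_le_one⟩, h0⟩
  have hz : z ∈ γ '' Icc (0 : ℝ) 1 := ⟨1, ⟨zero_le_one, le_refl 1⟩, h1⟩
  exact hconn.subset_connectedComponentIn hy hsub hz

/-- let `(X,d)` be a proper, connected, unbounded metric space that is uniformly
locally quasiconvex with constants `R ∈ (0,∞)` and `C ≥ 1`. Then for every `x₀ ∈ X` and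
`r > 0`, only finitely many connected components of `X ∖ B(x₀,r)` meet
`X ∖ B(x₀, r + 2CR)`. -/
theorem statement14 {X : Type*} [MetricSpace X] [ProperSpace X] [ConnectedSpace X]
    (hunbdd : ¬ Bornology.IsBounded (Set.univ : Set X))
    (R C : ℝ) (hR : 0 < R) (hC : 1 ≤ C)
    (hqc : ∀ x y : X, dist x y ≤ R →
      ∃ γ : ℝ → X, LipschitzOnWith (Real.toNNReal (C * dist x y)) γ (Set.Icc 0 1) ∧
        γ 0 = x ∧ γ 1 = y)
    (x₀ : X) (r : ℝ) (hr : 0 < r) :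
    {E : Set X | (∃ y ∈ (ball x₀ r)ᶜ, E = connectedComponentIn (ball x₀ r)ᶜ y) ∧
      (E ∩ (ball x₀ (r + 2 * C * R))ᶜ).Nonempty}.Finite := by
  set F := (ball x₀ r)ᶜ with hF_def
  have hFclosed : IsClosed F := isOpen_ball.isClosed_compl
  have hCR : 0 < C * R := by positivity
  set S := {E : Set X | (∃ y ∈ F, E = connectedComponentIn F y) ∧
      (E ∩ (ball x₀ (r + 2 * C * R))ᶜ).Nonempty} with hS_def
  -- Step 1: each component in S contains a point at distance exactly r + C*R from x₀.
  have key : ∀ E ∈ S, ∃ p ∈ E, dist x₀ p = r + C * R := by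
    rintro E ⟨⟨y, hyF, rfl⟩, q, hqE, hqfar⟩
    have hqdist : r + 2 * C * R ≤ dist x₀ q := by
      simpa [mem_ball, dist_comm, not_lt] using hqfar
    -- Sub-claim: E contains a point at distance ≤ r + C*R from x₀.
    have hnear : ∃ z ∈ connectedComponentIn F y, dist x₀ z ≤ r + C * R := by
      by_contra hall
      push_neg at hall
      -- Then E would be open
      have hopen : IsOpen (connectedComponentIn F y) := by
        rw [Metric.isOpen_iff]
        intro w hw
        refine ⟨R, hR, fun z hz => ?_⟩
        have hwz : dist w z ≤ R := le_of_lt (by rwa [mem_ball, dist_comm] at hz)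
        have hwfar : r + C * R < dist x₀ w := hall w hw
        have hz' : z ∈ connectedComponentIn F w := by
          refine aux_same_comp hC hqc hwz ?_
          have : C * dist w z ≤ C * R := mul_le_mul_of_nonneg_left hwz (by linarith)
          linarith
        rw [connectedComponentIn_eq hw]; exact hz'
      have hclosed : IsClosed (connectedComponentIn F y) := aux_closed_ccIn hFclosed y
      have hne : (connectedComponentIn F y).Nonempty := ⟨q, hqE⟩
      have huniv : connectedComponentIn F y = univ := by
        rcases isClopen_iff.mp ⟨hclosed, hopen⟩ with h | h
        · exact absurd (h ▸ hne) (by simp)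
        · exact h
      have hx₀F : x₀ ∈ F := (connectedComponentIn_subset F y) (huniv ▸ mem_univ x₀)
      simp only [hF_def, mem_compl_iff, mem_ball, not_lt, dist_self] at hx₀F
      linarith
    obtain ⟨z, hzE, hzdist⟩ := hnear
    -- Intermediate value theorem
    have hcont : Continuous (fun p : X => dist x₀ p) := continuous_const.dist continuous_id
    have himg : IsPreconnected ((fun p : X => dist x₀ p) '' connectedComponentIn F y) :=
      isPreconnected_connectedComponentIn.image _ hcont.continuousOn
    have hmem : r + C * R ∈ (fun p : X => dist x₀ p) '' connectedComponentIn F y := by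
      have hord := himg.ordConnected
      refine hord.out (mem_image_of_mem _ hzE) (mem_image_of_mem _ hqE) ⟨hzdist, ?_⟩
      show r + C * R ≤ dist x₀ q
      linarith
    obtain ⟨p, hpE, hp⟩ := hmem
    exact ⟨p, hpE, hp⟩
  classical
  -- choose the point for each component
  choose! p hpE hpdist using key
  have hEcomp : ∀ E ∈ S, E = connectedComponentIn F (p E) := by
    intro E hE
    obtain ⟨yE, _, hEeq⟩ := hE.1
    rw [hEeq]
    exact connectedComponentIn_eq (hEeq ▸ hpE E hE)
  -- injectivity of p on S
  have hinj : InjOn p S := by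
    intro E hE E' hE' hpp
    rw [hEcomp E hE, hEcomp E' hE', hpp]
  -- separation: distinct points of the image are > R apart
  have hsep : ∀ a ∈ p '' S, ∀ b ∈ p '' S, dist a b ≤ R → a = b := by
    rintro _ ⟨E, hE, rfl⟩ _ ⟨E', hE', rfl⟩ hab
    have hsame : p E' ∈ connectedComponentIn F (p E) := by
      refine aux_same_comp hC hqc hab ?_
      have : C * dist (p E) (p E') ≤ C * R := mul_le_mul_of_nonneg_left hab (by linarith)
      rw [hpdist E hE]; linarith
    have : E = E' := by
      rw [hEcomp E hE, hEcomp E' hE', connectedComponentIn_eq hsame]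
    rw [this]
  -- the image lies in the compact sphere
  have himg_sphere : p '' S ⊆ sphere x₀ (r + C * R) := by
    rintro _ ⟨E, hE, rfl⟩
    simp only [mem_sphere, dist_comm]
    exact hpdist E hE
  -- finite cover of the sphere by balls of radius R/2
  obtain ⟨t, hts, htfin, hcover⟩ :=
    (isCompact_sphere x₀ (r + C * R)).finite_cover_balls (e := R / 2) (by linarith)
  -- each small ball contains at most one point of the image, so the image is finite
  have himgfin : (p '' S).Finite := by
    have hsub : p '' S ⊆ ⋃ c ∈ t, (p '' S ∩ ball c (R / 2)) := by
      intro a ha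
      have h := hcover (himg_sphere ha)
      simp only [mem_iUnion] at h ⊢
      obtain ⟨c, hc, hac⟩ := h
      exact ⟨c, hc, ha, hac⟩
    refine Set.Finite.subset (Set.Finite.biUnion htfin fun c _ => ?_) hsub
    apply Set.Subsingleton.finite
    rintro a ⟨haS, hab⟩ b ⟨hbS, hbb⟩
    apply hsep a haS b hbS
    rw [mem_ball] at hab hbb
    have h1 : dist a b ≤ dist a c + dist c b := dist_triangle _ _ _
    have h2 : dist c b = dist b c := dist_comm _ _
    linarith
  exact Set.Finite.of_finite_image himgfin hinj
end

section
/- Let 1 ≤ p < ∞, let (X,d,μ) satisfy the standing assumptions, let ρ : X → [0,∞] be a Borel function with ∫_X ρ^p dμ < ∞, let k ∈ [0,∞), and let A ⊆ X be a nonempty closed set. Define u(x) := min{ k, inf{ ∫₀^L ρ(γ(t)) dt : L ≥ 0, γ : [0,L] → X is 1-Lipschitz, γ(0) ∈ A, γ(L) = x } } and v(x) := inf{ ∫₀^L ρ(γ(t)) dt : L ≥ 0, γ : [0,L] → X is 1-Lipschitz, γ(0) ∈ A, γ(L) = x } ∈ [0,∞] (with inf ∅ = ∞). Then u and v are measurable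 with respect to the completion of μ, and ρ is an upper gradient of u. Moreover, if there is a constant C ≥ 0 with ρ ≤ C on X, and for every x ∈ X there exists a 1-Lipschitz curve γ : [0,L] → X with γ(0) ∈ A and γ(L) = x, then v is finite everywhere and ρ is an upper gradient of v. -/
open MeasureTheory Metric Set Filter
open scoped ENNReal NNReal Topology

/-- The infimum `inf { ∫₀^L ρ(γ(t)) dt }` over all `1`-Lipschitz curves `γ : [0,L] → X` from
the set `A` to the point `x` (with `inf ∅ = ∞`). -/
noncomputable def curveInf {X : Type*} [MetricSpace X] (ρ : X → ℝ≥0∞) (A : Set X)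
    (x : X) : ℝ≥0∞ :=
  ⨅ (L : ℝ) (γ : ℝ → X) (_ : 0 ≤ L) (_ : LipschitzOnWith 1 γ (Set.Icc 0 L))
    (_ : γ 0 ∈ A) (_ : γ L = x), ∫⁻ t in Set.Icc 0 L, ρ (γ t)

section AuxCapacity


-- capacitability core: for continuous f : (ℕ→ℕ) → X and finite-measure W,
-- inner approximation of (range f) ∩ W by measurable subsets
theorem inner_approx {X : Type*} [MetricSpace X] [MeasurableSpace X] [BorelSpace X]
    (μ : Measure X) {f : (ℕ → ℕ) → X} (hf : Continuous f) {W : Set X}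
    (hW : MeasurableSet W) (hWfin : μ W ≠ ∞) {a : ℝ≥0∞} (ha : a < μ (range f ∩ W)) :
    ∃ M : Set X, MeasurableSet M ∧ M ⊆ range f ∩ W ∧ a ≤ μ M := by
  -- T n m : σ's whose first n coordinates are bounded by m
  set T : ℕ → (ℕ → ℕ) → Set (ℕ → ℕ) := fun n m => {σ | ∀ i < n, σ i ≤ m i} with hT
  set Q : ℕ → (ℕ → ℕ) → Prop := fun n m => a < μ (f '' T n m ∩ W) with hQ
  have hQ0 : ∀ m, Q 0 m := by
    intro m
    have : T 0 m = univ := by ext σ; simp [hT]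
    simpa [hQ, this, image_univ] using ha
  -- step: given Q n m, there is j with Q (n+1) (update m n j)
  have hstep : ∀ n (m : ℕ → ℕ), Q n m → ∃ j, Q (n + 1) (Function.update m n j) := by
    intro n m hQn
    have hmono : Monotone (fun j => f '' T (n+1) (Function.update m n j) ∩ W) := by
      intro j j' hjj'
      refine inter_subset_inter_left _ (image_mono (f := f) ?_)
      intro σ hσ i hi
      rcases Nat.lt_or_ge i n with h | h
      · simpa [Function.update, Nat.ne_of_lt h] using hσ i hi
      · have : i = n := le_antisymm (Nat.lt_succ_iff.1 hi) h
        subst this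
        have := hσ i (Nat.lt_succ_self _)
        simp only [Function.update_self] at this ⊢
        exact this.trans hjj'
    have hunion : (⋃ j, f '' T (n+1) (Function.update m n j) ∩ W) = f '' T n m ∩ W := by
      ext x
      simp only [mem_iUnion, mem_inter_iff, mem_image]
      constructor
      · rintro ⟨j, ⟨σ, hσ, rfl⟩, hxW⟩
        refine ⟨⟨σ, fun i hi => ?_, rfl⟩, hxW⟩
        have := hσ i (hi.trans (Nat.lt_succ_self _))
        rwa [Function.update_of_ne (Nat.ne_of_lt hi)] at this
      · rintro ⟨⟨σ, hσ, rfl⟩, hxW⟩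
        refine ⟨σ n, ⟨σ, fun i hi => ?_, rfl⟩, hxW⟩
        rcases Nat.lt_or_ge i n with h | h
        · rw [Function.update_of_ne (Nat.ne_of_lt h)]; exact hσ i h
        · have : i = n := le_antisymm (Nat.lt_succ_iff.1 hi) h
          subst this; simp
    have := hmono.measure_iUnion (μ := μ)
    rw [hunion] at this
    rw [hQ] at hQn
    rw [this] at hQn
    exact lt_iSup_iff.1 hQn
  -- recursive construction of the bound sequence
  choose step hstep using hstep
  set C : ∀ n : ℕ, {m : ℕ → ℕ // Q n m} :=
    fun n => Nat.rec ⟨fun _ => 0, hQ0 _⟩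
      (fun n p => ⟨Function.update p.1 n (step n p.1 p.2), hstep n p.1 p.2⟩) n with hC
  -- the limiting sequence
  set m : ℕ → ℕ := fun i => (C (i+1)).1 i with hm
  have hcoh : ∀ n i, i < n → (C n).1 i = m i := by
    intro n
    induction n with
    | zero => intro i hi; omega
    | succ n ih =>
      intro i hi
      rcases Nat.lt_or_ge i n with h | h
      · have : (C (n+1)).1 i = (C n).1 i := by
          simp only [hC]
          exact Function.update_of_ne (Nat.ne_of_lt h) _ _
        rw [this, ih i h]
      · have : i = n := by omega
        subst this; rfl
  have hTm : ∀ n, T n m = T n (C n).1 := by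
    intro n; ext σ
    simp only [hT, mem_setOf_eq]
    constructor <;> intro h i hi
    · rw [hcoh n i hi]; exact h i hi
    · rw [← hcoh n i hi]; exact h i hi
  have hQm : ∀ n, a < μ (f '' T n m ∩ W) := by
    intro n
    rw [hTm n]
    exact (C n).2
  -- the compact kernel
  set K0 : Set (ℕ → ℕ) := {σ | ∀ i, σ i ≤ m i} with hK0
  have hK0c : IsCompact K0 := by
    have : K0 = Set.pi univ (fun i => Set.Iic (m i)) := by
      ext σ; simp [hK0, Set.mem_pi, Pi.le_def]
    rw [this]
    exact isCompact_univ_pi (fun i => (Set.finite_Iic _).isCompact)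
  set K : Set X := f '' K0 with hKdef
  have hKc : IsCompact K := hK0c.image hf
  -- every open set around K eventually contains f '' T n m
  have key : ∀ U : Set X, IsOpen U → K ⊆ U → ∃ n, f '' T n m ⊆ U := by
    intro U hUopen hKU
    by_contra hcon
    push_neg at hcon
    have : ∀ n, ∃ σ ∈ T n m, f σ ∉ U := by
      intro n
      rcases Set.not_subset.1 (hcon n) with ⟨x, hx1, hx2⟩
      rcases hx1 with ⟨σ, hσ, rfl⟩
      exact ⟨σ, hσ, hx2⟩
    choose σ hσT hσU using this
    set ψ : ℕ → (ℕ → ℕ) := fun n i => min (σ n i) (m i) with hψ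
    have hψK0 : ∀ n, ψ n ∈ K0 := fun n i => min_le_right _ _
    obtain ⟨τ, hτK0, φ, hφ, hφt⟩ := hK0c.tendsto_subseq hψK0
    -- σ (φ j) also tends to τ
    have hσt : Tendsto (fun j => σ (φ j)) atTop (𝓝 τ) := by
      rw [tendsto_pi_nhds]
      intro i
      have h1 : Tendsto (fun j => ψ (φ j) i) atTop (𝓝 (τ i)) := by
        have := hφt
        rw [tendsto_pi_nhds] at this
        exact this i
      refine h1.congr' ?_
      filter_upwards [Filter.eventually_ge_atTop (i+1)] with j hj
      have : σ (φ j) i ≤ m i := hσT (φ j) i (lt_of_lt_of_le (Nat.lt_succ_self i) (hj.trans (hφ.le_apply)))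
      simp [hψ, min_eq_left this]
    have : Tendsto (fun j => f (σ (φ j))) atTop (𝓝 (f τ)) := (hf.tendsto τ).comp hσt
    have hfτ : f τ ∈ U := hKU ⟨τ, hτK0, rfl⟩
    have := this.eventually (hUopen.mem_nhds hfτ)
    rcases this.exists with ⟨j, hj⟩
    exact hσU (φ j) hj
  -- conclude: μ (K ∩ W) ≥ a via thickenings
  have hthick : ∀ δ : ℝ, 0 < δ → a ≤ μ (Metric.thickening δ K ∩ W) := by
    intro δ hδ
    obtain ⟨n, hn⟩ := key _ Metric.isOpen_thickening (Metric.self_subset_thickening hδ K)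
    exact le_trans (hQm n).le (measure_mono (inter_subset_inter_left _ hn))
  have hKW : a ≤ μ (K ∩ W) := by
    have h1 : Tendsto (fun n : ℕ => μ (Metric.thickening (1/(n+1) : ℝ) K ∩ W)) atTop
        (𝓝 (μ (⋂ n : ℕ, Metric.thickening (1/(n+1) : ℝ) K ∩ W))) := by
      apply tendsto_measure_iInter_atTop
      · intro n
        exact ((Metric.isOpen_thickening.measurableSet).inter hW).nullMeasurableSet
      · intro i j hij
        refine inter_subset_inter_left _ (Metric.thickening_mono ?_ K)
        apply one_div_le_one_div_of_le (by positivity)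
        have : (i:ℝ) ≤ j := Nat.cast_le.2 hij
        linarith
      · exact ⟨0, by
          refine ne_top_of_le_ne_top hWfin (measure_mono (inter_subset_right))⟩
    have h2 : (⋂ n : ℕ, Metric.thickening (1/(n+1) : ℝ) K ∩ W) = K ∩ W := by
      rw [← iInter_inter]
      congr 1
      apply Subset.antisymm
      · intro x hx
        rw [mem_iInter] at hx
        have : x ∈ closure K := by
          rw [Metric.mem_closure_iff]
          intro ε hε
          obtain ⟨n, hn⟩ := exists_nat_gt (1/ε)
          have h1n : (1:ℝ)/(n+1) < ε := by
            rw [div_lt_iff₀ (by positivity)]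
            rw [div_lt_iff₀ hε] at hn
            nlinarith
          obtain ⟨y, hyK, hy⟩ := Metric.mem_thickening_iff.1 (hx n)
          exact ⟨y, hyK, by rw [dist_comm] at hy ⊢; linarith⟩
        rwa [hKc.isClosed.closure_eq] at this
      · intro x hx
        rw [mem_iInter]
        intro n
        exact Metric.self_subset_thickening (by positivity) K hx
    have := ge_of_tendsto h1 (Filter.Eventually.of_forall fun n => hthick _ (by positivity))
    rwa [h2] at this
  exact ⟨K ∩ W, (hKc.isClosed.measurableSet).inter hW,
    inter_subset_inter_left _ (by rw [hKdef]; exact image_subset_range f K0), hKW⟩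

theorem analytic_nullMeasurableSet {X : Type*} [MetricSpace X] [MeasurableSpace X] [BorelSpace X]
    (μ : Measure X) (B : ℕ → Set X) (hBm : ∀ n, MeasurableSet (B n))
    (hBfin : ∀ n, μ (B n) ≠ ∞) (hBcov : (⋃ n, B n) = univ)
    {s : Set X} (hs : AnalyticSet s) : NullMeasurableSet s μ := by
  rw [AnalyticSet] at hs
  rcases hs with rfl | ⟨f, hf, rfl⟩
  · exact MeasurableSet.empty.nullMeasurableSet
  have main : ∀ W : Set X, MeasurableSet W → μ W ≠ ∞ →
      NullMeasurableSet (range f ∩ W) μ := by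
    intro W hW hWfin
    set a := μ (range f ∩ W) with ha
    have hafin : a ≠ ∞ := ne_top_of_le_ne_top hWfin (measure_mono inter_subset_right)
    -- a measurable M ⊆ range f ∩ W of full measure
    have hM : ∃ M : Set X, MeasurableSet M ∧ M ⊆ range f ∩ W ∧ a ≤ μ M := by
      rcases eq_or_ne a 0 with h0 | h0
      · exact ⟨∅, MeasurableSet.empty, empty_subset _, by simp [h0]⟩
      · have hlt : ∀ n : ℕ, a - (n+1 : ℝ≥0∞)⁻¹ < a := by
          intro n
          exact ENNReal.sub_lt_self hafin h0 (by simp)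
        have := fun n => inner_approx μ hf hW hWfin (hlt n)
        choose M hMm hMsub hMge using this
        refine ⟨⋃ n, M n, MeasurableSet.iUnion hMm, iUnion_subset hMsub, ?_⟩
        refine ENNReal.le_of_forall_pos_le_add fun ε hε _ => ?_
        obtain ⟨n, hn⟩ := ENNReal.exists_inv_nat_lt (ENNReal.coe_ne_zero.2 (ne_of_gt hε))
        have h1 : a - (n+1 : ℝ≥0∞)⁻¹ ≤ μ (⋃ n, M n) :=
          le_trans (hMge n) (measure_mono (subset_iUnion _ n))
        have h2 : ((n:ℝ≥0∞)+1)⁻¹ ≤ (ε : ℝ≥0∞) := by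
          refine le_trans ?_ hn.le
          exact ENNReal.inv_le_inv.2 (le_add_of_nonneg_right zero_le_one)
        calc a ≤ μ (⋃ n, M n) + (n+1 : ℝ≥0∞)⁻¹ := by
                rw [← tsub_le_iff_right]; exact h1
          _ ≤ μ (⋃ n, M n) + ε := by gcongr
    rcases hM with ⟨M, hMm, hMsub, hMge⟩
    have hMfin : μ M ≠ ∞ := ne_top_of_le_ne_top hafin (measure_mono hMsub)
    have hHfull : μ (toMeasurable μ (range f ∩ W)) = a := measure_toMeasurable _
    have hMH : M ⊆ toMeasurable μ (range f ∩ W) := hMsub.trans (subset_toMeasurable _ _)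
    have hdiff : μ (toMeasurable μ (range f ∩ W) \ M) = 0 := by
      rw [measure_diff hMH hMm.nullMeasurableSet hMfin]
      rw [hHfull]
      have : μ M = a := le_antisymm (le_trans (measure_mono hMsub) (le_of_eq ha.symm)) hMge
      rw [this, tsub_self]
    have : range f ∩ W = M ∪ ((range f ∩ W) \ M) := (union_diff_cancel hMsub).symm
    rw [this]
    exact hMm.nullMeasurableSet.union
      (NullMeasurableSet.of_null (measure_mono_null (diff_subset_diff_left (subset_toMeasurable _ _)) hdiff))
  have : range f = ⋃ n, (range f ∩ B n) := by
    rw [← inter_iUnion, hBcov, inter_univ]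
  rw [this]
  exact NullMeasurableSet.iUnion fun n => main (B n) (hBm n) (hBfin n)


end AuxCapacity

section AuxCurves

/-- 1-Lipschitz on the rationals. -/
def LipQ {X : Type*} [MetricSpace X] (h : ℚ → X) : Prop :=
  ∀ q q' : ℚ, dist (h q) (h q') ≤ |(q : ℝ) - (q' : ℝ)|

/-- A canonical sequence of rationals converging to `t`. -/
noncomputable def qseq (n : ℕ) (t : ℝ) : ℚ := ⌊t * 2^n⌋ / (2^n : ℚ)

lemma qseq_dist (n : ℕ) (t : ℝ) : |(qseq n t : ℝ) - t| ≤ ((2:ℝ)^n)⁻¹ := by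
  have h2 : (0:ℝ) < 2^n := by positivity
  have h1 : ((qseq n t : ℝ)) = (⌊t * 2^n⌋ : ℝ)/2^n := by unfold qseq; push_cast; ring
  have hfl1 : ((⌊t * 2^n⌋ : ℝ)) ≤ t * 2^n := Int.floor_le _
  have hfl2 : t * 2^n < (⌊t * 2^n⌋ : ℝ) + 1 := Int.lt_floor_add_one _
  rw [h1, abs_le]
  constructor
  · rw [neg_le, neg_sub, sub_le_iff_le_add]
    have : t ≤ ((⌊t * 2^n⌋ : ℝ) + 1)/2^n := by
      rw [le_div_iff₀ h2]; linarith
    calc t ≤ ((⌊t * 2^n⌋ : ℝ) + 1)/2^n := this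
      _ = (2^n:ℝ)⁻¹ + (⌊t * 2^n⌋ : ℝ)/2^n := by ring
  · have : (⌊t * 2^n⌋ : ℝ)/2^n ≤ t := by
      rw [div_le_iff₀ h2]; linarith
    have h3 : (0:ℝ) ≤ (2^n:ℝ)⁻¹ := by positivity
    linarith

lemma qseq_tendsto (t : ℝ) : Tendsto (fun n => (qseq n t : ℝ)) atTop (𝓝 t) := by
  rw [Metric.tendsto_atTop]
  intro ε hε
  obtain ⟨N, hN⟩ := pow_unbounded_of_one_lt (1/ε) (one_lt_two (α := ℝ))
  refine ⟨N, fun n hn => ?_⟩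
  rw [Real.dist_eq]
  have h1 : ((2:ℝ)^n)⁻¹ < ε := by
    rw [inv_lt_iff_one_lt_mul₀ (by positivity)]
    have : (2:ℝ)^N ≤ 2^n := pow_le_pow_right₀ one_le_two hn
    rw [div_lt_iff₀ hε] at hN
    nlinarith
  exact lt_of_le_of_lt (qseq_dist n t) h1

variable {X : Type*} [MetricSpace X]

/-- Extension of a map on rationals to the reals (junk where not `LipQ`). -/
noncomputable def ratExt [Nonempty X] (h : ℚ → X) (t : ℝ) : X :=
  limUnder atTop (fun n => h (qseq n t))

lemma ratExt_tendsto [Nonempty X] [CompleteSpace X] {h : ℚ → X} (hh : LipQ h) (t : ℝ) :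
    Tendsto (fun n => h (qseq n t)) atTop (𝓝 (ratExt h t)) := by
  have hc : CauchySeq (fun n => h (qseq n t)) := by
    rw [Metric.cauchySeq_iff']
    intro ε hε
    obtain ⟨N, hN⟩ := pow_unbounded_of_one_lt (2/ε) (one_lt_two (α := ℝ))
    refine ⟨N, fun n hn => ?_⟩
    have b1 : dist (h (qseq n t)) (h (qseq N t)) ≤ |(qseq n t : ℝ) - (qseq N t : ℝ)| := hh _ _
    have b2 : |(qseq n t : ℝ) - (qseq N t : ℝ)| ≤ ((2:ℝ)^n)⁻¹ + ((2:ℝ)^N)⁻¹ := by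
      have := qseq_dist n t
      have := qseq_dist N t
      calc |(qseq n t : ℝ) - (qseq N t : ℝ)|
          = |((qseq n t : ℝ) - t) + (t - (qseq N t : ℝ))| := by ring_nf
        _ ≤ |(qseq n t : ℝ) - t| + |t - (qseq N t : ℝ)| := abs_add_le _ _
        _ ≤ ((2:ℝ)^n)⁻¹ + ((2:ℝ)^N)⁻¹ := by rw [abs_sub_comm t]; gcongr
    have b3 : ((2:ℝ)^n)⁻¹ ≤ ((2:ℝ)^N)⁻¹ := by
      gcongr
      · exact one_le_two
    have b4 : ((2:ℝ)^N)⁻¹ < ε/2 := by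
      rw [div_lt_iff₀ hε] at hN
      rw [inv_lt_iff_one_lt_mul₀ (by positivity)]
      nlinarith
    calc dist (h (qseq n t)) (h (qseq N t)) ≤ ((2:ℝ)^n)⁻¹ + ((2:ℝ)^N)⁻¹ := b1.trans b2
      _ ≤ ((2:ℝ)^N)⁻¹ + ((2:ℝ)^N)⁻¹ := by gcongr
      _ < ε/2 + ε/2 := by gcongr
      _ = ε := by ring
  exact hc.tendsto_limUnder

lemma ratExt_dist [Nonempty X] [CompleteSpace X] {h : ℚ → X} (hh : LipQ h) (t : ℝ) (q : ℚ) :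
    dist (ratExt h t) (h q) ≤ |t - (q:ℝ)| := by
  have h1 : Tendsto (fun n => dist (h (qseq n t)) (h q)) atTop (𝓝 (dist (ratExt h t) (h q))) :=
    (ratExt_tendsto hh t).dist tendsto_const_nhds
  have h2 : Tendsto (fun n => ((2:ℝ)^n)⁻¹ + |t - (q:ℝ)|) atTop (𝓝 (0 + |t - (q:ℝ)|)) := by
    refine Tendsto.add_const _ ?_
    exact tendsto_inv_atTop_zero.comp (tendsto_pow_atTop_atTop_of_one_lt one_lt_two)
  rw [zero_add] at h2
  refine le_of_tendsto_of_tendsto' h1 h2 fun n => ?_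
  calc dist (h (qseq n t)) (h q) ≤ |(qseq n t : ℝ) - (q:ℝ)| := hh _ _
    _ = |((qseq n t : ℝ) - t) + (t - (q:ℝ))| := by ring_nf
    _ ≤ |(qseq n t : ℝ) - t| + |t - (q:ℝ)| := abs_add_le _ _
    _ ≤ ((2:ℝ)^n)⁻¹ + |t - (q:ℝ)| := by gcongr; exact qseq_dist n t

lemma ratExt_lipschitz [Nonempty X] [CompleteSpace X] {h : ℚ → X} (hh : LipQ h) :
    LipschitzWith 1 (ratExt h) := by
  rw [lipschitzWith_iff_dist_le_mul]
  intro s t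
  rw [NNReal.coe_one, one_mul]
  refine le_of_forall_pos_le_add fun ε hε => ?_
  obtain ⟨N, hN⟩ := pow_unbounded_of_one_lt (4/ε) (one_lt_two (α := ℝ))
  have hNε : ((2:ℝ)^N)⁻¹ < ε/4 := by
    rw [div_lt_iff₀ hε] at hN
    rw [inv_lt_iff_one_lt_mul₀ (by positivity)]
    nlinarith
  set q := qseq N s
  set q' := qseq N t
  have b1 : dist (ratExt h s) (h q) ≤ |s - (q:ℝ)| := ratExt_dist hh s q
  have b2 : dist (ratExt h t) (h q') ≤ |t - (q':ℝ)| := ratExt_dist hh t q'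
  have b3 : dist (h q) (h q') ≤ |(q:ℝ) - (q':ℝ)| := hh _ _
  have c1 : |s - (q:ℝ)| ≤ ((2:ℝ)^N)⁻¹ := by rw [abs_sub_comm]; exact qseq_dist N s
  have c2 : |t - (q':ℝ)| ≤ ((2:ℝ)^N)⁻¹ := by rw [abs_sub_comm]; exact qseq_dist N t
  have c3 : |(q:ℝ) - (q':ℝ)| ≤ ((2:ℝ)^N)⁻¹ + dist s t + ((2:ℝ)^N)⁻¹ := by
    rw [Real.dist_eq]
    calc |(q:ℝ) - (q':ℝ)| = |((q:ℝ) - s) + (s - t) + (t - (q':ℝ))| := by ring_nf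
      _ ≤ |((q:ℝ) - s) + (s - t)| + |t - (q':ℝ)| := abs_add_le _ _
      _ ≤ |(q:ℝ) - s| + |s - t| + |t - (q':ℝ)| := by gcongr; exact abs_add_le _ _
      _ ≤ ((2:ℝ)^N)⁻¹ + |s - t| + ((2:ℝ)^N)⁻¹ := by gcongr; exact qseq_dist N s
  calc dist (ratExt h s) (ratExt h t)
      ≤ dist (ratExt h s) (h q) + dist (h q) (h q') + dist (h q') (ratExt h t) :=
        dist_triangle4 _ _ _ _
    _ ≤ |s - (q:ℝ)| + (((2:ℝ)^N)⁻¹ + dist s t + ((2:ℝ)^N)⁻¹) + |t - (q':ℝ)| := by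
        rw [dist_comm (h q') (ratExt h t)]; gcongr; exact b3.trans c3
    _ ≤ ((2:ℝ)^N)⁻¹ + (((2:ℝ)^N)⁻¹ + dist s t + ((2:ℝ)^N)⁻¹) + ((2:ℝ)^N)⁻¹ := by gcongr
    _ ≤ dist s t + ε := by linarith

lemma ratExt_eq [Nonempty X] [CompleteSpace X] {γ : ℝ → X} (hγ : LipschitzWith 1 γ) (t : ℝ) :
    ratExt (fun q : ℚ => γ (q:ℝ)) t = γ t := by
  have hh : LipQ (fun q : ℚ => γ (q:ℝ)) := by
    intro q q'
    simpa [Real.dist_eq] using hγ.dist_le_mul (q:ℝ) (q':ℝ)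
  have h1 : Tendsto (fun n => γ ((qseq n t : ℚ) : ℝ)) atTop (𝓝 (γ t)) :=
    (hγ.continuous.tendsto t).comp (qseq_tendsto t)
  exact tendsto_nhds_unique (ratExt_tendsto hh t) h1

lemma ratExt_continuousOn [Nonempty X] [CompleteSpace X] :
    ContinuousOn (fun p : (ℚ → X) × ℝ => ratExt p.1 p.2) {p | LipQ p.1} := by
  intro ⟨h, t⟩ hp
  rw [ContinuousWithinAt, Metric.tendsto_nhds]
  intro ε hε
  obtain ⟨N, hN⟩ := pow_unbounded_of_one_lt (8/ε) (one_lt_two (α := ℝ))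
  have hNε : ((2:ℝ)^N)⁻¹ < ε/8 := by
    rw [div_lt_iff₀ hε] at hN
    rw [inv_lt_iff_one_lt_mul₀ (by positivity)]
    nlinarith
  set q := qseq N t with hq
  have hqt : |t - (q:ℝ)| ≤ ((2:ℝ)^N)⁻¹ := by rw [abs_sub_comm]; exact qseq_dist N t
  have hV : {p : (ℚ → X) × ℝ | dist (p.1 q) (h q) < ε/4 ∧ |p.2 - t| < ε/8} ∈ 𝓝 (h, t) := by
    have o1 : IsOpen {p : (ℚ → X) × ℝ | dist (p.1 q) (h q) < ε/4} := by
      have : Continuous fun p : (ℚ → X) × ℝ => dist (p.1 q) (h q) :=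
        ((continuous_apply q).comp continuous_fst).dist continuous_const
      exact isOpen_lt this continuous_const
    have o2 : IsOpen {p : (ℚ → X) × ℝ | |p.2 - t| < ε/8} := by
      have : Continuous fun p : (ℚ → X) × ℝ => |p.2 - t| :=
        (continuous_snd.sub continuous_const).abs
      exact isOpen_lt this continuous_const
    refine (o1.inter o2).mem_nhds ⟨?_, ?_⟩
    · simp only [mem_setOf_eq, dist_self]; positivity
    · simp only [mem_setOf_eq, sub_self, abs_zero]; positivity
  filter_upwards [mem_nhdsWithin_of_mem_nhds hV, self_mem_nhdsWithin] with p hpV hpS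
  obtain ⟨hp1, hp2⟩ := hpV
  have b1 : dist (ratExt p.1 p.2) (p.1 q) ≤ |p.2 - (q:ℝ)| := ratExt_dist hpS p.2 q
  have b3 : dist (h q) (ratExt h t) ≤ |t - (q:ℝ)| := by
    rw [dist_comm]; exact ratExt_dist hp t q
  have c1 : |p.2 - (q:ℝ)| ≤ |p.2 - t| + |t - (q:ℝ)| := by
    calc |p.2 - (q:ℝ)| = |(p.2 - t) + (t - (q:ℝ))| := by ring_nf
      _ ≤ _ := abs_add_le _ _
  calc dist (ratExt p.1 p.2) (ratExt h t)
      ≤ dist (ratExt p.1 p.2) (p.1 q) + dist (p.1 q) (h q) + dist (h q) (ratExt h t) :=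
        dist_triangle4 _ _ _ _
    _ ≤ (|p.2 - t| + |t - (q:ℝ)|) + dist (p.1 q) (h q) + |t - (q:ℝ)| := by
        gcongr
        exact b1.trans c1
    _ < (ε/8 + ε/8) + ε/4 + ε/8 := by
        have hh8 := lt_of_le_of_lt hqt hNε
        gcongr
    _ < ε := by linarith

open Classical in
/-- Globally defined extension operator, junk value `h 0` off `LipQ`. -/
noncomputable def extS [Nonempty X] (h : ℚ → X) (t : ℝ) : X :=
  if LipQ h then ratExt h t else h 0

lemma extS_of_lipQ [Nonempty X] {h : ℚ → X} (hh : LipQ h) (t : ℝ) :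
    extS h t = ratExt h t := if_pos hh

lemma isClosed_lipQ [Nonempty X] : IsClosed {p : (ℚ → X) × ℝ | LipQ p.1} := by
  have : {p : (ℚ → X) × ℝ | LipQ p.1} =
      ⋂ (q : ℚ) (q' : ℚ), {p : (ℚ → X) × ℝ | dist (p.1 q) (p.1 q') ≤ |(q:ℝ) - (q':ℝ)|} := by
    ext p; simp [LipQ, mem_iInter]
  rw [this]
  refine isClosed_iInter fun q => isClosed_iInter fun q' => ?_
  exact isClosed_le (((continuous_apply q).comp continuous_fst).dist
    ((continuous_apply q').comp continuous_fst)) continuous_const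

lemma extS_measurable [Nonempty X] [CompleteSpace X] [SecondCountableTopology X]
    [MeasurableSpace X] [BorelSpace X] :
    Measurable (fun p : (ℚ → X) × ℝ => extS p.1 p.2) := by
  apply measurable_of_isOpen
  intro U hU
  set C := {p : (ℚ → X) × ℝ | LipQ p.1} with hC
  have hsplit : (fun p : (ℚ → X) × ℝ => extS p.1 p.2) ⁻¹' U =
      ((fun p : (ℚ → X) × ℝ => ratExt p.1 p.2) ⁻¹' U ∩ C) ∪
      ((fun p : (ℚ → X) × ℝ => p.1 0) ⁻¹' U ∩ Cᶜ) := by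
    ext p
    by_cases hp : LipQ p.1
    · simp [extS, hp, hC]
    · simp [extS, hp, hC]
  rw [hsplit]
  have h1 : MeasurableSet ((fun p : (ℚ → X) × ℝ => ratExt p.1 p.2) ⁻¹' U ∩ C) := by
    obtain ⟨O, hOopen, hOeq⟩ := (_root_.continuousOn_iff'.1 (ratExt_continuousOn (X := X))) U hU
    rw [hOeq]
    exact hOopen.measurableSet.inter isClosed_lipQ.measurableSet
  refine h1.union (MeasurableSet.inter ?_ isClosed_lipQ.measurableSet.compl)
  exact (((continuous_apply (0:ℚ)).comp continuous_fst).measurable) hU.measurableSet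

variable [ProperSpace X] [MeasurableSpace X] [BorelSpace X]

/-- The sublevel sets of `curveInf` are analytic. -/
theorem curveInf_lt_analytic [Nonempty X] (ρ : X → ℝ≥0∞) (hρ : Measurable ρ)
    (A : Set X) (hAclosed : IsClosed A) (c : ℝ≥0∞) :
    AnalyticSet {x : X | curveInf ρ A x < c} := by
  -- the parameter space
  set Λ := (ℝ × (ℚ → X))
  -- the integral functional
  set G : Λ × ℝ → ℝ≥0∞ := fun p =>
    Set.indicator {r : Λ × ℝ | 0 ≤ r.2 ∧ r.2 ≤ r.1.1} (fun r => ρ (extS r.1.2 r.2)) p with hG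
  have hGmeas : Measurable G := by
    refine Measurable.indicator ?_ ?_
    · exact hρ.comp (extS_measurable.comp
        ((measurable_snd.comp measurable_fst).prodMk measurable_snd))
    · refine MeasurableSet.inter ?_ ?_
      · exact measurableSet_le measurable_const measurable_snd
      · exact measurableSet_le measurable_snd ((measurable_fst.comp measurable_fst))
  set F : Λ → ℝ≥0∞ := fun Lh => ∫⁻ t, G (Lh, t) with hF
  have hFmeas : Measurable F := hGmeas.lintegral_prod_right'
  have hFval : ∀ (L : ℝ) (h : ℚ → X), F (L, h) = ∫⁻ t in Icc 0 L, ρ (extS h t) := by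
    intro L h
    have hGt : ∀ t : ℝ, G ((L,h), t) = (Icc (0:ℝ) L).indicator (fun t => ρ (extS h t)) t := by
      intro t
      simp only [hG, Set.indicator_apply, mem_setOf_eq, mem_Icc]
    rw [hF]
    simp only
    rw [lintegral_congr hGt, lintegral_indicator measurableSet_Icc]
  -- the Borel set of admissible parameters
  set B : Set Λ := {Lh | 0 ≤ Lh.1 ∧ LipQ Lh.2 ∧ extS Lh.2 0 ∈ A ∧ F Lh < c} with hB
  have hBmeas : MeasurableSet B := by
    refine MeasurableSet.inter (measurableSet_le measurable_const measurable_fst) ?_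
    refine MeasurableSet.inter ?_ (MeasurableSet.inter ?_ ?_)
    · have : IsClosed {Lh : Λ | LipQ Lh.2} := by
        have := isClosed_lipQ (X := X)
        have heq : {Lh : Λ | LipQ Lh.2} =
            (fun Lh : Λ => (Lh.2, Lh.1)) ⁻¹' {p : (ℚ → X) × ℝ | LipQ p.1} := by
          ext Lh; simp
        rw [heq]
        exact this.preimage (continuous_snd.prodMk continuous_fst)
      exact this.measurableSet
    · exact (extS_measurable.comp (measurable_snd.prodMk measurable_const)) hAclosed.measurableSet
    · exact hFmeas measurableSet_Iio
  -- the endpoint map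
  set π : Λ → X := fun Lh => extS Lh.2 Lh.1 with hπ
  have hπmeas : Measurable π := extS_measurable.comp (measurable_snd.prodMk measurable_fst)
  have himg : {x : X | curveInf ρ A x < c} = π '' B := by
    ext x
    simp only [mem_setOf_eq, mem_image]
    constructor
    · intro hx
      rw [curveInf] at hx
      simp only [iInf_lt_iff] at hx
      obtain ⟨L, γ, hL, hγ, h0, hend, hint⟩ := hx
      -- clamp γ to a globally 1-Lipschitz curve
      set γ' : ℝ → X := fun t => γ ((Set.projIcc 0 L hL t : ℝ)) with hγ'
      have hγ'lip : LipschitzWith 1 γ' := by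
        have h1 : LipschitzWith 1 ((Icc 0 L).restrict γ) := lipschitzOnWith_iff_restrict.1 hγ
        have h2 : LipschitzWith 1 (Set.projIcc 0 L hL) := LipschitzWith.projIcc hL
        have : γ' = ((Icc 0 L).restrict γ) ∘ (Set.projIcc 0 L hL) := rfl
        rw [this]
        simpa using h1.comp h2
      have hγ'eq : ∀ t ∈ Icc 0 L, γ' t = γ t := by
        intro t ht
        simp only [hγ', Set.projIcc_of_mem hL ht]
      set h : ℚ → X := fun q => γ' (q : ℝ) with hh
      have hhlip : LipQ h := by
        intro q q'
        simpa [Real.dist_eq] using hγ'lip.dist_le_mul (q:ℝ) (q':ℝ)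
      have hext : ∀ t, extS h t = γ' t := by
        intro t
        rw [extS_of_lipQ hhlip, hh]
        exact ratExt_eq hγ'lip t
      refine ⟨(L, h), ⟨hL, hhlip, ?_, ?_⟩, ?_⟩
      · rw [hext 0, hγ'eq 0 (by constructor <;> [rfl; exact hL])]
        exact h0
      · rw [hFval]
        have : ∫⁻ t in Icc 0 L, ρ (extS h t) = ∫⁻ t in Icc 0 L, ρ (γ t) := by
          apply lintegral_congr_ae
          filter_upwards [self_mem_ae_restrict (measurableSet_Icc (a := (0:ℝ)) (b := L))] with t ht
          rw [hext t, hγ'eq t ht]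
        rw [this]
        exact hint
      · rw [hπ]
        simp only
        rw [hext L, hγ'eq L (by constructor <;> [exact hL; rfl]), hend]
    · rintro ⟨⟨L, h⟩, ⟨hL, hhlip, hA0, hFc⟩, rfl⟩
      set γ := ratExt h with hγdef
      have hγlip : LipschitzWith 1 γ := ratExt_lipschitz hhlip
      have : curveInf ρ A (π (L, h)) ≤ ∫⁻ t in Icc 0 L, ρ (γ t) := by
        rw [curveInf]
        refine iInf_le_of_le L (iInf_le_of_le γ ?_)
        refine iInf_le_of_le hL ?_
        refine iInf_le_of_le (hγlip.lipschitzOnWith) ?_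
        refine iInf_le_of_le ?_ ?_
        · show ratExt h 0 ∈ A
          rw [← extS_of_lipQ hhlip 0]
          exact hA0
        · refine iInf_le_of_le ?_ le_rfl
          show ratExt h L = π (L, h)
          rw [hπ]
          simp only
          rw [extS_of_lipQ hhlip]
      refine lt_of_le_of_lt this ?_
      have : ∫⁻ t in Icc 0 L, ρ (γ t) = F (L, h) := by
        rw [hFval]
        apply lintegral_congr_ae
        filter_upwards [self_mem_ae_restrict (measurableSet_Icc (a := (0:ℝ)) (b := L))] with t _
        rw [extS_of_lipQ hhlip]
      rw [this]
      exact hFc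
  rw [himg]
  exact hBmeas.analyticSet_image hπmeas


variable {X : Type*} [MetricSpace X]

lemma curveInf_le (ρ : X → ℝ≥0∞) (A : Set X) {L : ℝ} {γ : ℝ → X} {x : X}
    (hL : 0 ≤ L) (hγ : LipschitzOnWith 1 γ (Set.Icc 0 L)) (h0 : γ 0 ∈ A) (hend : γ L = x) :
    curveInf ρ A x ≤ ∫⁻ t in Set.Icc 0 L, ρ (γ t) := by
  rw [curveInf]
  exact iInf_le_of_le L (iInf_le_of_le γ (iInf_le_of_le hL (iInf_le_of_le hγ
    (iInf_le_of_le h0 (iInf_le_of_le hend le_rfl)))))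

/-- translation invariance of the set lintegral -/
lemma lintegral_Ioc_shift (g : ℝ → ℝ≥0∞) (a b c : ℝ) :
    ∫⁻ t in Ioc (a+c) (b+c), g (t - c) = ∫⁻ t in Ioc a b, g t := by
  have e : ℝ ≃ᵐ ℝ := (Homeomorph.addRight c).toMeasurableEquiv
  have h2 : (fun t : ℝ => t + c) ⁻¹' Ioc (a+c) (b+c) = Ioc a b := by
    ext t; simp only [mem_preimage, mem_Ioc]; constructor <;> intro h <;>
      exact ⟨by linarith [h.1], by linarith [h.2]⟩
  have h1 : (volume : Measure ℝ).restrict (Ioc (a+c) (b+c)) =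
      Measure.map ((Homeomorph.addRight c).toMeasurableEquiv : ℝ → ℝ) (volume.restrict (Ioc a b)) :=
    calc (volume : Measure ℝ).restrict (Ioc (a+c) (b+c))
        = (Measure.map (· + c) (volume : Measure ℝ)).restrict (Ioc (a+c) (b+c)) := by
          rw [map_add_right_eq_self]
      _ = Measure.map (· + c) (volume.restrict ((· + c) ⁻¹' Ioc (a+c) (b+c))) :=
          Measure.restrict_map (measurable_add_const c) measurableSet_Ioc
      _ = Measure.map ((Homeomorph.addRight c).toMeasurableEquiv : ℝ → ℝ)
            (volume.restrict (Ioc a b)) := by rw [h2]; rfl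
  conv_lhs => rw [h1]
  rw [lintegral_map_equiv]
  apply lintegral_congr
  intro t
  simp [Homeomorph.addRight]

/-- reflection invariance of the set lintegral -/
lemma lintegral_Icc_reflect (g : ℝ → ℝ≥0∞) (L : ℝ) :
    ∫⁻ t in Icc 0 L, g (L - t) = ∫⁻ t in Icc 0 L, g t := by
  have e : ℝ ≃ᵐ ℝ := (Homeomorph.subLeft L).toMeasurableEquiv
  have hmap : Measure.map (fun t : ℝ => L - t) volume = volume := by
    have : (fun t : ℝ => L - t) = (fun t : ℝ => L + t) ∘ Neg.neg := by
      ext t; simp [sub_eq_add_neg]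
    rw [this, ← Measure.map_map (measurable_const_add L) measurable_neg,
      Measure.map_neg_eq_self, map_add_left_eq_self]
  have h2 : (fun t : ℝ => L - t) ⁻¹' Icc 0 L = Icc 0 L := by
    ext t; simp only [mem_preimage, mem_Icc]; constructor <;> intro h <;>
      exact ⟨by linarith [h.2], by linarith [h.1]⟩
  have h1 : (volume : Measure ℝ).restrict (Icc 0 L) =
      Measure.map ((Homeomorph.subLeft L).toMeasurableEquiv : ℝ → ℝ) (volume.restrict (Icc 0 L)) :=
    calc (volume : Measure ℝ).restrict (Icc 0 L)
        = (Measure.map (fun t : ℝ => L - t) (volume : Measure ℝ)).restrict (Icc 0 L) := by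
          rw [hmap]
      _ = Measure.map (fun t : ℝ => L - t) (volume.restrict ((fun t : ℝ => L - t) ⁻¹' Icc 0 L)) :=
          Measure.restrict_map (measurable_const_sub L) measurableSet_Icc
      _ = Measure.map ((Homeomorph.subLeft L).toMeasurableEquiv : ℝ → ℝ)
            (volume.restrict (Icc 0 L)) := by rw [h2]; rfl
  conv_rhs => rw [h1]
  rw [lintegral_map_equiv]
  apply lintegral_congr
  intro t
  simp [Homeomorph.subLeft]

/-- Concatenation estimate: going along a curve increases `curveInf` by at most the
integral of `ρ` along the curve. -/
lemma curveInf_concat (ρ : X → ℝ≥0∞) (A : Set X) {L : ℝ} {γ : ℝ → X}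
    (hL : 0 ≤ L) (hγ : LipschitzOnWith 1 γ (Set.Icc 0 L)) :
    curveInf ρ A (γ L) ≤ curveInf ρ A (γ 0) + ∫⁻ t in Set.Icc 0 L, ρ (γ t) := by
  refine ENNReal.le_of_forall_pos_le_add fun ε hε hfin => ?_
  have hv0 : curveInf ρ A (γ 0) < ∞ :=
    lt_of_le_of_lt (le_add_right le_rfl) hfin
  have hlt : curveInf ρ A (γ 0) < curveInf ρ A (γ 0) + ε := by
    refine ENNReal.lt_add_right hv0.ne ?_
    exact_mod_cast hε.ne'
  nth_rewrite 1 [curveInf] at hlt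
  simp only [iInf_lt_iff] at hlt
  obtain ⟨L₁, γ₁, hL₁, hγ₁, hγ₁0, hγ₁end, hint1⟩ := hlt
  -- the concatenated curve
  set γ₂ : ℝ → X := fun t => if t ≤ L₁ then γ₁ t else γ (t - L₁) with hγ₂
  have hγ₁d : ∀ s ∈ Icc 0 L₁, ∀ t ∈ Icc 0 L₁, dist (γ₁ s) (γ₁ t) ≤ dist s t := by
    intro s hs t ht
    have := (lipschitzOnWith_iff_dist_le_mul.1 hγ₁) s hs t ht
    simpa using this
  have hγd : ∀ s ∈ Icc 0 L, ∀ t ∈ Icc 0 L, dist (γ s) (γ t) ≤ dist s t := by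
    intro s hs t ht
    have := (lipschitzOnWith_iff_dist_le_mul.1 hγ) s hs t ht
    simpa using this
  have key : ∀ s ∈ Icc 0 (L₁ + L), ∀ t ∈ Icc 0 (L₁ + L), s ≤ t →
      dist (γ₂ s) (γ₂ t) ≤ dist s t := by
    intro s hs t ht hst
    rw [Real.dist_eq, abs_of_nonpos (by linarith)]
    by_cases ht1 : t ≤ L₁
    · have hs1 : s ≤ L₁ := hst.trans ht1
      rw [hγ₂]; simp only [if_pos hs1, if_pos ht1]
      have := hγ₁d s ⟨hs.1, hs1⟩ t ⟨hs.1.trans hst, ht1⟩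
      rwa [Real.dist_eq, abs_of_nonpos (by linarith)] at this
    · push_neg at ht1
      by_cases hs1 : s ≤ L₁
      · rw [hγ₂]; simp only [if_pos hs1, if_neg (not_le.2 ht1)]
        have d1 : dist (γ₁ s) (γ₁ L₁) ≤ L₁ - s := by
          have := hγ₁d s ⟨hs.1, hs1⟩ L₁ ⟨hL₁, le_rfl⟩
          rwa [Real.dist_eq, abs_of_nonpos (by linarith), neg_sub] at this
        have d2 : dist (γ 0) (γ (t - L₁)) ≤ t - L₁ := by
          have := hγd 0 ⟨le_rfl, hL⟩ (t - L₁) ⟨by linarith, by linarith [ht.2]⟩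
          rwa [Real.dist_eq, abs_of_nonpos (by linarith), neg_sub, sub_zero] at this
        calc dist (γ₁ s) (γ (t - L₁))
            ≤ dist (γ₁ s) (γ₁ L₁) + dist (γ₁ L₁) (γ (t - L₁)) := dist_triangle _ _ _
          _ = dist (γ₁ s) (γ₁ L₁) + dist (γ 0) (γ (t - L₁)) := by rw [hγ₁end]
          _ ≤ (L₁ - s) + (t - L₁) := add_le_add d1 d2
          _ = -(s - t) := by ring
      · push_neg at hs1
        rw [hγ₂]; simp only [if_neg (not_le.2 hs1), if_neg (not_le.2 ht1)]
        have := hγd (s - L₁) ⟨by linarith, by linarith [hs.2]⟩ (t - L₁)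
          ⟨by linarith, by linarith [ht.2]⟩
        rw [Real.dist_eq, abs_of_nonpos (by linarith)] at this
        convert this using 2
        ring
  have hγ₂lip : LipschitzOnWith 1 γ₂ (Icc 0 (L₁ + L)) := by
    rw [lipschitzOnWith_iff_dist_le_mul]
    intro s hs t ht
    rw [NNReal.coe_one, one_mul]
    rcases le_total s t with h | h
    · exact key s hs t ht h
    · rw [dist_comm (γ₂ s), dist_comm s]
      exact key t ht s hs h
  have hγ₂0 : γ₂ 0 ∈ A := by
    rw [hγ₂]; simp only [if_pos hL₁]; exact hγ₁0
  have hγ₂end : γ₂ (L₁ + L) = γ L := by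
    rcases eq_or_lt_of_le hL with h0 | h0
    · subst h0
      simp only [hγ₂, add_zero, if_pos le_rfl]
      exact hγ₁end
    · simp only [hγ₂, if_neg (not_le.2 (by linarith : L₁ < L₁ + L))]
      congr 1
      ring
  have hint2 : ∫⁻ t in Icc 0 (L₁ + L), ρ (γ₂ t) =
      (∫⁻ t in Icc 0 L₁, ρ (γ₁ t)) + ∫⁻ t in Icc 0 L, ρ (γ t) := by
    have hdisj : Disjoint (Icc 0 L₁) (Ioc L₁ (L₁ + L)) := by
      rw [Set.disjoint_left]
      intro r hr hr'
      exact absurd hr.2 (not_le.2 hr'.1)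
    have hunion : Icc 0 L₁ ∪ Ioc L₁ (L₁ + L) = Icc 0 (L₁ + L) :=
      Set.Icc_union_Ioc_eq_Icc hL₁ (by linarith)
    have hrestr : (volume : Measure ℝ).restrict (Icc 0 (L₁ + L)) =
        volume.restrict (Icc 0 L₁) + volume.restrict (Ioc L₁ (L₁ + L)) := by
      rw [← hunion, Measure.restrict_union hdisj measurableSet_Ioc]
    rw [hrestr, lintegral_add_measure]
    congr 1
    · apply lintegral_congr_ae
      filter_upwards [self_mem_ae_restrict (measurableSet_Icc (a := (0:ℝ)) (b := L₁))] with t ht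
      simp only [hγ₂, if_pos ht.2]
    · have e1 : ∫⁻ t in Ioc L₁ (L₁ + L), ρ (γ₂ t) = ∫⁻ t in Ioc L₁ (L₁ + L), ρ (γ (t - L₁)) := by
        apply lintegral_congr_ae
        filter_upwards [self_mem_ae_restrict (measurableSet_Ioc (a := L₁) (b := L₁ + L))]
          with t ht
        simp only [hγ₂, if_neg (not_le.2 ht.1)]
      have e2 : Ioc L₁ (L₁ + L) = Ioc (0 + L₁) (L + L₁) := by rw [zero_add, add_comm L L₁]
      rw [e1, e2]
      have h3 := lintegral_Ioc_shift (fun s => ρ (γ s)) 0 L L₁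
      rw [h3]
      rw [Measure.restrict_congr_set Ioc_ae_eq_Icc]
  have hcle : curveInf ρ A (γ L) ≤ ∫⁻ t in Icc 0 (L₁ + L), ρ (γ₂ t) := by
    refine curveInf_le ρ A (by linarith) hγ₂lip hγ₂0 hγ₂end
  rw [hint2] at hcle
  calc curveInf ρ A (γ L) ≤ (∫⁻ t in Icc 0 L₁, ρ (γ₁ t)) + ∫⁻ t in Icc 0 L, ρ (γ t) := hcle
    _ ≤ (curveInf ρ A (γ 0) + ε) + ∫⁻ t in Icc 0 L, ρ (γ t) := by gcongr
    _ = curveInf ρ A (γ 0) + (∫⁻ t in Icc 0 L, ρ (γ t)) + ε := add_right_comm _ _ _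

/-- The two-sided estimate for curves. -/
lemma curveInf_two_sided (ρ : X → ℝ≥0∞) (A : Set X) {L : ℝ} {γ : ℝ → X}
    (hL : 0 ≤ L) (hγ : LipschitzOnWith 1 γ (Set.Icc 0 L)) :
    curveInf ρ A (γ L) ≤ curveInf ρ A (γ 0) + ∫⁻ t in Set.Icc 0 L, ρ (γ t) ∧
    curveInf ρ A (γ 0) ≤ curveInf ρ A (γ L) + ∫⁻ t in Set.Icc 0 L, ρ (γ t) := by
  refine ⟨curveInf_concat ρ A hL hγ, ?_⟩
  -- reverse curve
  set γ' : ℝ → X := fun t => γ (L - t) with hγ'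
  have hγ'lip : LipschitzOnWith 1 γ' (Icc 0 L) := by
    rw [lipschitzOnWith_iff_dist_le_mul]
    intro s hs t ht
    rw [NNReal.coe_one, one_mul]
    have := (lipschitzOnWith_iff_dist_le_mul.1 hγ) (L - s) ⟨by linarith [hs.2], by linarith [hs.1]⟩
      (L - t) ⟨by linarith [ht.2], by linarith [ht.1]⟩
    simp only [NNReal.coe_one, one_mul] at this
    refine le_trans this (le_of_eq ?_)
    rw [Real.dist_eq, Real.dist_eq]
    rw [show L - s - (L - t) = -(s - t) by ring, abs_neg]
  have h0 : γ' 0 = γ L := by simp [hγ']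
  have hLe : γ' L = γ 0 := by simp [hγ']
  have hint : ∫⁻ t in Icc 0 L, ρ (γ' t) = ∫⁻ t in Icc 0 L, ρ (γ t) := by
    simp only [hγ']
    exact lintegral_Icc_reflect (fun t => ρ (γ t)) L
  have := curveInf_concat ρ A hL hγ'lip
  rw [h0, hLe, hint] at this
  exact this

lemma abs_toReal_bound {a b I : ℝ≥0∞} (ha : a ≠ ∞) (hb : b ≠ ∞)
    (h1 : a ≤ b + I) (h2 : b ≤ a + I) :
    ENNReal.ofReal |a.toReal - b.toReal| ≤ I := by
  rcases eq_or_ne I ∞ with rfl | hI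
  · exact le_top
  rw [ENNReal.ofReal_le_iff_le_toReal hI, abs_sub_le_iff]
  constructor
  · have := ENNReal.toReal_mono (by simp [hb, hI, ENNReal.add_ne_top]) h1
    rw [ENNReal.toReal_add hb hI] at this
    linarith
  · have := ENNReal.toReal_mono (by simp [ha, hI, ENNReal.add_ne_top]) h2
    rw [ENNReal.toReal_add ha hI] at this
    linarith


end AuxCurves

/-- under the standing assumptions, for Borel `ρ : X → [0,∞]` with
`∫ ρᵖ dμ < ∞`, `k ∈ [0,∞)` and a nonempty closed `A ⊆ X`, the functions
`u = min{k, inf_γ ∫_γ ρ}` and `v = inf_γ ∫_γ ρ` are measurable with respect to the completion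
of `μ`, and `ρ` is an upper gradient of `u`; moreover, if `ρ ≤ C` for some constant `C ≥ 0`
and every point of `X` can be joined to `A` by a `1`-Lipschitz curve, then `v` is finite
everywhere and `ρ` is an upper gradient of `v`. -/
theorem statement17 {X : Type*} [MetricSpace X] [MeasurableSpace X] [BorelSpace X]
    [ProperSpace X] [ConnectedSpace X]
    (μ : Measure X) (hXinf : μ Set.univ = ⊤)
    (hball : ∀ (x : X) (r : ℝ), 0 < r → 0 < μ (ball x r) ∧ μ (ball x r) < ⊤)
    (p : ℝ) (hp : 1 ≤ p)
    (ρ : X → ℝ≥0∞) (hρ : Measurable ρ) (hρp : (∫⁻ x, ρ x ^ p ∂μ) < ⊤)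
    (k : ℝ) (hk : 0 ≤ k)
    (A : Set X) (hA : A.Nonempty) (hAclosed : IsClosed A) :
    NullMeasurable (fun x : X => (min (ENNReal.ofReal k) (curveInf ρ A x)).toReal) μ ∧
    NullMeasurable (curveInf ρ A) μ ∧
    IsUpperGradient ρ (fun x : X => (min (ENNReal.ofReal k) (curveInf ρ A x)).toReal) ∧
    ((∃ C : ℝ, 0 ≤ C ∧ ∀ x : X, ρ x ≤ ENNReal.ofReal C) →
      (∀ x : X, ∃ (L : ℝ) (γ : ℝ → X), 0 ≤ L ∧ LipschitzOnWith 1 γ (Set.Icc 0 L) ∧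
        γ 0 ∈ A ∧ γ L = x) →
      (∀ x : X, curveInf ρ A x < ⊤) ∧
        IsUpperGradient ρ (fun x : X => (curveInf ρ A x).toReal)) := by
  haveI : Nonempty X := ⟨hA.some⟩
  obtain ⟨x₀, hx₀⟩ := hA
  -- a countable cover by finite-measure balls
  set B : ℕ → Set X := fun n => ball x₀ (n+1) with hBdef
  have hBm : ∀ n, MeasurableSet (B n) := fun n => measurableSet_ball
  have hBfin : ∀ n, μ (B n) ≠ ⊤ := fun n => (hball x₀ (n+1) (by positivity)).2.ne
  have hBcov : (⋃ n, B n) = univ := by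
    ext x
    simp only [mem_iUnion, mem_univ, iff_true]
    obtain ⟨n, hn⟩ := exists_nat_gt (dist x x₀)
    refine ⟨n, ?_⟩
    simp only [hBdef, mem_ball]
    linarith
  -- null measurability of `v = curveInf ρ A`
  have hv : NullMeasurable (curveInf ρ A) μ := by
    have h1 : ∀ c : ℝ≥0∞, NullMeasurableSet {x | curveInf ρ A x < c} μ := fun c =>
      analytic_nullMeasurableSet μ B hBm hBfin hBcov (curveInf_lt_analytic ρ hρ A hAclosed c)
    have h2 : Measurable (β := ℝ≥0∞) (α := NullMeasurableSpace X μ)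
        (fun x => curveInf ρ A x) := by
      apply measurable_of_Iio
      intro c
      exact h1 c
    exact fun s hs => h2 hs
  have hgm : Measurable (fun y : ℝ≥0∞ => (min (ENNReal.ofReal k) y).toReal) :=
    (measurable_const.min measurable_id).ennreal_toReal
  have hu : NullMeasurable (fun x : X => (min (ENNReal.ofReal k) (curveInf ρ A x)).toReal) μ :=
    fun s hs => hv (hgm hs)
  refine ⟨hu, hv, ?_, ?_⟩
  · -- ρ is an upper gradient of u
    intro L γ hL hγ
    obtain ⟨hcc1, hcc2⟩ := curveInf_two_sided ρ A hL hγ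
    have hbound : ∀ v w : ℝ≥0∞, v ≤ w + ∫⁻ t in Icc 0 L, ρ (γ t) →
        min (ENNReal.ofReal k) v ≤ min (ENNReal.ofReal k) w + ∫⁻ t in Icc 0 L, ρ (γ t) := by
      intro v w hvw
      calc min (ENNReal.ofReal k) v
          ≤ min (ENNReal.ofReal k) (w + ∫⁻ t in Icc 0 L, ρ (γ t)) := min_le_min le_rfl hvw
        _ ≤ min (ENNReal.ofReal k + ∫⁻ t in Icc 0 L, ρ (γ t))
              (w + ∫⁻ t in Icc 0 L, ρ (γ t)) := min_le_min (le_add_right le_rfl) le_rfl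
        _ = min (ENNReal.ofReal k) w + ∫⁻ t in Icc 0 L, ρ (γ t) := min_add_add_right _ _ _
    exact abs_toReal_bound
      (ne_top_of_le_ne_top ENNReal.ofReal_ne_top (min_le_left _ _))
      (ne_top_of_le_ne_top ENNReal.ofReal_ne_top (min_le_left _ _))
      (hbound _ _ hcc1) (hbound _ _ hcc2)
  · -- the bounded case
    rintro ⟨C, hC0, hCb⟩ hreach
    have hfin : ∀ x : X, curveInf ρ A x < ⊤ := by
      intro x
      obtain ⟨L, γ, hL, hγ, h0, hend⟩ := hreach x
      refine lt_of_le_of_lt (curveInf_le ρ A hL hγ h0 hend) ?_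
      calc ∫⁻ t in Icc 0 L, ρ (γ t)
          ≤ ∫⁻ _ in Icc 0 L, ENNReal.ofReal C := lintegral_mono fun t => hCb _
        _ = ENNReal.ofReal C * volume (Icc 0 L) := by rw [setLIntegral_const]
        _ < ⊤ := ENNReal.mul_lt_top ENNReal.ofReal_lt_top
            (by rw [Real.volume_Icc]; exact ENNReal.ofReal_lt_top)
    refine ⟨hfin, ?_⟩
    intro L γ hL hγ
    obtain ⟨hcc1, hcc2⟩ := curveInf_two_sided ρ A hL hγ
    exact abs_toReal_bound (hfin _).ne (hfin _).ne hcc1 hcc2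
end

section
/- Let p ∈ [1,∞) and κ > 0. Let f : (0,∞) → ℝ be locally absolutely continuous with lim_{t→0⁺} f(t) = 0 and lim_{t→∞} f(t) = 0; concretely, suppose there is a locally integrable function f' : (0,∞) → ℝ such that f(b) − f(a) = ∫_a^b f'(t) dt for all 0 < a ≤ b < ∞. Then ∫₀^∞ |f(t)|^p e^{κt} dt ≤ (p/κ)^p · ∫₀^∞ |f'(t)|^p e^{κt} dt. -/
open MeasureTheory Metric Set Filter
open scoped ENNReal NNReal Topology


/-- Fubini swap for the triangular region `0 < t < s`. -/
lemma aux_swap (H w : ℝ → ℝ≥0∞) (hH : Measurable H) (hw : Measurable w) :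
    ∫⁻ t in Ioi (0:ℝ), w t * ∫⁻ s in Ioi t, H s =
      ∫⁻ s, H s * ∫⁻ t in Ioo 0 s, w t := by
  have hset : MeasurableSet {q : ℝ × ℝ | q.1 < q.2} :=
    measurableSet_lt measurable_fst measurable_snd
  have hind : ∀ t s : ℝ, ({q : ℝ × ℝ | q.1 < q.2}.indicator (fun q => H q.2) (t, s)) =
      (Ioi t).indicator H s := by
    intro t s
    by_cases h : t < s
    · simp [Set.indicator_apply, h]
    · simp [Set.indicator_apply, h]
  have step1 : ∀ t : ℝ, w t * ∫⁻ s in Ioi t, H s =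
      ∫⁻ s, {q : ℝ × ℝ | q.1 < q.2}.indicator (fun q => H q.2) (t, s) * w t := by
    intro t
    rw [← lintegral_indicator measurableSet_Ioi H, mul_comm,
      ← lintegral_mul_const _ (hH.indicator measurableSet_Ioi)]
    exact lintegral_congr fun s => by rw [hind]
  calc ∫⁻ t in Ioi (0:ℝ), w t * ∫⁻ s in Ioi t, H s
      = ∫⁻ t in Ioi (0:ℝ), ∫⁻ s, {q : ℝ × ℝ | q.1 < q.2}.indicator (fun q => H q.2) (t, s) * w t :=
        lintegral_congr fun t => step1 t
    _ = ∫⁻ s, ∫⁻ t in Ioi (0:ℝ), {q : ℝ × ℝ | q.1 < q.2}.indicator (fun q => H q.2) (t, s) * w t := by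
        apply lintegral_lintegral_swap
        exact (((hH.comp measurable_snd).indicator hset).mul (hw.comp measurable_fst)).aemeasurable
    _ = ∫⁻ s, H s * ∫⁻ t in Ioo 0 s, w t := by
        refine lintegral_congr fun s => ?_
        have : ∀ t : ℝ, {q : ℝ × ℝ | q.1 < q.2}.indicator (fun q => H q.2) (t, s) * w t =
            (Iio s).indicator (fun t => H s * w t) t := by
          intro t
          by_cases h : t < s
          · simp [Set.indicator_apply, h]
          · simp [Set.indicator_apply, h]
        rw [lintegral_congr this, lintegral_indicator measurableSet_Iio,
          Measure.restrict_restrict measurableSet_Iio, inter_comm, Ioi_inter_Iio,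
          lintegral_const_mul _ hw]

/-- value of `∫⁻ s in Ioi t, e^{-(b s)}`. -/
lemma aux_exp_Ioi {b : ℝ} (hb : 0 < b) (t : ℝ) :
    ∫⁻ s in Ioi t, ENNReal.ofReal (Real.exp (-(b * s))) =
      ENNReal.ofReal (Real.exp (-(b * t)) / b) := by
  have hint : IntegrableOn (fun s : ℝ => Real.exp (-(b * s))) (Ioi t) := by
    simpa [neg_mul] using exp_neg_integrableOn_Ioi t hb
  rw [← ofReal_integral_eq_lintegral_ofReal hint
    (ae_of_all _ fun s => (Real.exp_pos _).le)]
  congr 1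
  have hderiv : ∀ x ∈ Ioi t, HasDerivAt (fun x : ℝ => -(Real.exp (-(b * x)) / b))
      (Real.exp (-(b * x))) x := by
    intro x _
    have h1 : HasDerivAt (fun x : ℝ => -(b * x)) (-b) x := by
      have h := ((hasDerivAt_id x).const_mul b).neg; simp only [mul_one] at h; exact h
    have h2 := (Real.hasDerivAt_exp (-(b * x))).comp x h1
    have h3 : HasDerivAt (fun x => -(Real.exp (-(b * x)) / b)) (-(Real.exp (-(b * x)) * -b / b)) x := (h2.div_const b).neg
    convert h3 using 1
    field_simp
  have htend : Tendsto (fun x : ℝ => -(Real.exp (-(b * x)) / b)) atTop (𝓝 0) := by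
    have h1 : Tendsto (fun x : ℝ => -(b * x)) atTop atBot := by
      exact tendsto_neg_atTop_atBot.comp (tendsto_id.const_mul_atTop hb)
    have h2 : Tendsto (fun x : ℝ => Real.exp (-(b * x))) atTop (𝓝 0) :=
      Real.tendsto_exp_atBot.comp h1
    simpa using (h2.div_const b).neg
  have hcont : ContinuousWithinAt (fun x : ℝ => -(Real.exp (-(b * x)) / b)) (Ici t) t := by
    exact (((Real.continuous_exp.comp (continuous_const.mul continuous_id).neg).div_const b).neg).continuousWithinAt
  rw [integral_Ioi_of_hasDerivAt_of_tendsto hcont hderiv hint htend]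
  ring

/-- bound for `∫⁻ t in Ioo 0 s, e^{b t}`. -/
lemma aux_exp_Ioo {b : ℝ} (hb : 0 < b) {s : ℝ} (hs : 0 < s) :
    ∫⁻ t in Ioo 0 s, ENNReal.ofReal (Real.exp (b * t)) ≤
      ENNReal.ofReal (Real.exp (b * s) / b) := by
  have hcont : Continuous fun t : ℝ => Real.exp (b * t) := by fun_prop
  have hint : IntegrableOn (fun t : ℝ => Real.exp (b * t)) (Ioo 0 s) :=
    (hcont.integrableOn_Icc).mono_set Ioo_subset_Icc_self
  rw [← ofReal_integral_eq_lintegral_ofReal hint (ae_of_all _ fun t => (Real.exp_pos _).le)]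
  apply ENNReal.ofReal_le_ofReal
  have hderiv : ∀ x ∈ uIcc (0:ℝ) s, HasDerivAt (fun x : ℝ => Real.exp (b * x) / b)
      (Real.exp (b * x)) x := by
    intro x _
    have h1 : HasDerivAt (fun x : ℝ => b * x) b x := by
      simpa using (hasDerivAt_id x).const_mul b
    have h2 := (Real.hasDerivAt_exp (b * x)).comp x h1
    have h3 : HasDerivAt (fun x => Real.exp (b * x) / b) (Real.exp (b * x) * b / b) x := h2.div_const b
    convert h3 using 1
    field_simp
  have hval : ∫ t in (0:ℝ)..s, Real.exp (b * t) =
      Real.exp (b * s) / b - Real.exp (b * 0) / b :=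
    intervalIntegral.integral_eq_sub_of_hasDerivAt hderiv (hcont.intervalIntegrable 0 s)
  have : ∫ t in Ioo (0:ℝ) s, Real.exp (b * t) = ∫ t in (0:ℝ)..s, Real.exp (b * t) := by
    rw [intervalIntegral.integral_of_le hs.le, integral_Ioc_eq_integral_Ioo]
  rw [this, hval]
  have : (0:ℝ) < Real.exp (b * 0) / b := by positivity
  linarith

/-- a one-dimensional weighted Sobolev inequality. If `f : (0,∞) → ℝ` is locally
absolutely continuous with a.e. derivative `f'` (i.e. `f'` is locally integrable on `(0,∞)`
and `f(b) - f(a) = ∫_a^b f'` for `0 < a ≤ b`), and `f(t) → 0` as `t → 0⁺` and as `t → ∞`,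
then `∫₀^∞ |f(t)|ᵖ e^{κt} dt ≤ (p/κ)ᵖ ∫₀^∞ |f'(t)|ᵖ e^{κt} dt`. -/
theorem statement19 (p κ : ℝ) (hp : 1 ≤ p) (hκ : 0 < κ)
    (f f' : ℝ → ℝ)
    (hloc : ∀ a b : ℝ, 0 < a → a ≤ b → IntegrableOn f' (Set.Icc a b))
    (hftc : ∀ a b : ℝ, 0 < a → a ≤ b → f b - f a = ∫ t in a..b, f' t)
    (h0 : Tendsto f (nhdsWithin 0 (Set.Ioi 0)) (𝓝 0))
    (hinfty : Tendsto f atTop (𝓝 0)) :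
    (∫⁻ t in Set.Ioi (0 : ℝ), ENNReal.ofReal (|f t| ^ p * Real.exp (κ * t))) ≤
      ENNReal.ofReal ((p / κ) ^ p) *
        ∫⁻ t in Set.Ioi (0 : ℝ), ENNReal.ofReal (|f' t| ^ p * Real.exp (κ * t)) := by
  have hp0 : (0:ℝ) < p := lt_of_lt_of_le one_pos hp
  -- a measurable version of f'
  have hcover : Set.Ioi (0:ℝ) = ⋃ n : ℕ, Set.Icc ((n:ℝ)+1)⁻¹ ((n:ℝ)+1) := by
    ext x
    simp only [mem_Ioi, mem_iUnion, mem_Icc]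
    constructor
    · intro hx
      obtain ⟨n, hn⟩ := exists_nat_gt (max x x⁻¹)
      have hn1 : x⁻¹ < (n:ℝ) + 1 := lt_of_le_of_lt (le_max_right _ _) (by linarith)
      have hn2 : x < (n:ℝ) + 1 := lt_of_le_of_lt (le_max_left _ _) (by linarith)
      refine ⟨n, ?_, hn2.le⟩
      have h1 : ((n:ℝ)+1)⁻¹ < x⁻¹⁻¹ := inv_strictAnti₀ (by positivity) hn1
      rw [inv_inv] at h1
      exact h1.le
    · rintro ⟨n, h1, _⟩
      exact lt_of_lt_of_le (by positivity) h1
  have hmeasf' : AEMeasurable f' (volume.restrict (Ioi 0)) := by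
    rw [hcover, aemeasurable_iUnion_iff]
    intro n
    have hn0 : (0:ℝ) < ((n:ℝ)+1)⁻¹ := by positivity
    have hnle : ((n:ℝ)+1)⁻¹ ≤ (n:ℝ)+1 := by
      have h1 : (1:ℝ) ≤ (n:ℝ)+1 := by
        have := Nat.cast_nonneg (α := ℝ) n; linarith
      calc ((n:ℝ)+1)⁻¹ ≤ 1 := by
            rw [inv_le_one_iff₀]; right; exact h1
        _ ≤ (n:ℝ)+1 := h1
    exact (hloc _ _ hn0 hnle).aemeasurable
  set g : ℝ → ℝ := hmeasf'.mk f' with hgdef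
  have hg : Measurable g := hmeasf'.measurable_mk
  have hfg : f' =ᵐ[volume.restrict (Ioi 0)] g := hmeasf'.ae_eq_mk
  have hg_ae : ∀ᵐ x ∂(volume : Measure ℝ), x ∈ Ioi (0:ℝ) → f' x = g x :=
    (ae_restrict_iff' measurableSet_Ioi).mp hfg
  have hloc_g : ∀ a b : ℝ, 0 < a → a ≤ b → IntegrableOn g (Icc a b) := by
    intro a b ha hab
    refine (hloc a b ha hab).congr_fun_ae ?_
    filter_upwards [ae_restrict_of_ae hg_ae, ae_restrict_mem measurableSet_Icc] with x h1 h2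
    exact h1 (lt_of_lt_of_le ha h2.1)
  have hftc_g : ∀ a b : ℝ, 0 < a → a ≤ b → f b - f a = ∫ t in a..b, g t := by
    intro a b ha hab
    rw [hftc a b ha hab]
    apply intervalIntegral.integral_congr_ae
    filter_upwards [hg_ae] with x h1 h2
    rw [uIoc_of_le hab] at h2
    exact h1 (lt_of_lt_of_le ha h2.1.le)
  -- step 2 : pointwise bound by the tail integral of |g|
  have hstep2 : ∀ t : ℝ, 0 < t →
      ENNReal.ofReal |f t| ≤ ∫⁻ s in Ioi t, ENNReal.ofReal |g s| := by
    intro t ht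
    have hbound : ∀ b : ℝ, t ≤ b → ENNReal.ofReal |f t| ≤
        ENNReal.ofReal |f b| + ∫⁻ s in Ioi t, ENNReal.ofReal |g s| := by
      intro b htb
      have h1 : f t = f b - ∫ s in t..b, g s := by
        have := hftc_g t b ht htb; linarith
      have hint : IntegrableOn g (Ioc t b) := (hloc_g t b ht htb).mono_set Ioc_subset_Icc_self
      have h2 : |f t| ≤ |f b| + ∫ s in Ioc t b, |g s| := by
        rw [h1, sub_eq_add_neg]
        refine (abs_add_le _ _).trans ?_
        rw [abs_neg]
        gcongr
        rw [intervalIntegral.integral_of_le htb]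
        calc |∫ s in Ioc t b, g s| ≤ ∫ s in Ioc t b, |g s| := by
              simpa [Real.norm_eq_abs] using norm_integral_le_integral_norm (μ := volume.restrict (Ioc t b)) g
          _ ≤ ∫ s in Ioc t b, |g s| := le_rfl
      calc ENNReal.ofReal |f t| ≤ ENNReal.ofReal (|f b| + ∫ s in Ioc t b, |g s|) :=
            ENNReal.ofReal_le_ofReal h2
        _ = ENNReal.ofReal |f b| + ENNReal.ofReal (∫ s in Ioc t b, |g s|) :=
            ENNReal.ofReal_add (abs_nonneg _) (integral_nonneg fun s => abs_nonneg _)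
        _ ≤ ENNReal.ofReal |f b| + ∫⁻ s in Ioi t, ENNReal.ofReal |g s| := by
            gcongr
            rw [ofReal_integral_eq_lintegral_ofReal hint.abs
              (ae_of_all _ fun s => abs_nonneg _)]
            exact lintegral_mono_set Ioc_subset_Ioi_self
    have hlim : Tendsto (fun b => ENNReal.ofReal |f b| + ∫⁻ s in Ioi t, ENNReal.ofReal |g s|)
        atTop (𝓝 (0 + ∫⁻ s in Ioi t, ENNReal.ofReal |g s|)) := by
      refine Tendsto.add ?_ tendsto_const_nhds
      have h1 : Tendsto (fun b => |f b|) atTop (𝓝 0) := by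
        simpa using hinfty.abs
      simpa using ENNReal.tendsto_ofReal h1
    have := ge_of_tendsto hlim ((eventually_ge_atTop t).mono fun b hb => hbound b hb)
    simpa using this
  set β : ℝ := κ / p with hβdef
  have hβ0 : 0 < β := div_pos hκ hp0
  have hpβ : p * β = κ := by rw [hβdef]; field_simp
  have hβinv : β⁻¹ = p / κ := by rw [hβdef]; field_simp
  -- Claim A
  have claimA : ∀ t : ℝ, 0 < t → (ENNReal.ofReal |f t|) ^ p ≤
      ENNReal.ofReal ((p/κ) ^ (p-1)) * ENNReal.ofReal (Real.exp (-((p-1) * β * t))) *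
        ∫⁻ s in Ioi t, (ENNReal.ofReal |g s|) ^ p * ENNReal.ofReal (Real.exp ((p-1) * β * s)) := by
    intro t ht
    rcases eq_or_lt_of_le hp with hp1 | hp1
    · -- p = 1
      subst hp1
      simp only [sub_self, zero_mul, neg_zero, Real.exp_zero, ENNReal.ofReal_one, one_mul, mul_one,
        Real.rpow_zero, ENNReal.rpow_one]
      exact hstep2 t ht
    · -- p > 1
      set q : ℝ := p / (p - 1) with hqdef
      have hpq : p.HolderConjugate q := Real.HolderConjugate.conjExponent hp1
      set a : ℝ := (p - 1) * β / p with hadef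
      have ha0 : 0 < a := by
        apply div_pos (mul_pos (by linarith) hβ0) hp0
      have hpa : p * a = (p - 1) * β := by rw [hadef]; field_simp
      have hq1 : p - 1 ≠ 0 := by linarith
      have hqa : q * a = β := by
        rw [hqdef, hadef]
        field_simp
      set F : ℝ → ℝ≥0∞ := fun s => ENNReal.ofReal |g s| * ENNReal.ofReal (Real.exp (a * s))
        with hFdef
      set G : ℝ → ℝ≥0∞ := fun s => ENNReal.ofReal (Real.exp (-(a * s))) with hGdef
      have hFmeas : AEMeasurable F (volume.restrict (Ioi t)) := by
        apply Measurable.aemeasurable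
        exact (ENNReal.measurable_ofReal.comp hg.abs).mul
          (ENNReal.measurable_ofReal.comp (by fun_prop))
      have hGmeas : AEMeasurable G (volume.restrict (Ioi t)) := by
        apply Measurable.aemeasurable
        exact ENNReal.measurable_ofReal.comp (by fun_prop)
      have hFG : ∀ s : ℝ, (F * G) s = ENNReal.ofReal |g s| := by
        intro s
        simp only [Pi.mul_apply, hFdef, hGdef, mul_assoc,
          ← ENNReal.ofReal_mul (Real.exp_pos (a * s)).le, ← Real.exp_add]
        simp
      have key := ENNReal.lintegral_mul_le_Lp_mul_Lq (volume.restrict (Ioi t)) hpq hFmeas hGmeas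
      rw [lintegral_congr hFG] at key
      have hFp : ∀ s : ℝ, F s ^ p =
          (ENNReal.ofReal |g s|) ^ p * ENNReal.ofReal (Real.exp ((p-1) * β * s)) := by
        intro s
        rw [hFdef]
        rw [ENNReal.mul_rpow_of_nonneg _ _ hp0.le,
          ENNReal.ofReal_rpow_of_nonneg (Real.exp_pos _).le hp0.le,
          ← Real.exp_mul, mul_comm (a * s) p, ← mul_assoc, hpa]
      have hGq : ∀ s : ℝ, G s ^ q =
          ENNReal.ofReal (Real.exp (-(β * s))) := by
        intro s
        rw [hGdef]
        rw [ENNReal.ofReal_rpow_of_nonneg (Real.exp_pos _).le hpq.symm.nonneg,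
          ← Real.exp_mul]
        congr 2
        rw [← hqa]; ring
      rw [lintegral_congr fun s => hFp s, lintegral_congr fun s => hGq s,
        aux_exp_Ioi hβ0 t] at key
      have hmain := (hstep2 t ht).trans key
      have hpow := ENNReal.rpow_le_rpow hmain hp0.le
      set A : ℝ≥0∞ := ∫⁻ s in Ioi t,
        (ENNReal.ofReal |g s|) ^ p * ENNReal.ofReal (Real.exp ((p-1) * β * s)) with hAdef
      set B : ℝ≥0∞ := ENNReal.ofReal (Real.exp (-(β * t)) / β) with hBdef
      calc (ENNReal.ofReal |f t|) ^ p ≤ (A ^ (1/p) * B ^ (1/q)) ^ p := hpow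
        _ = A * B ^ (p - 1) := by
            rw [ENNReal.mul_rpow_of_nonneg _ _ hp0.le, ← ENNReal.rpow_mul,
              ← ENNReal.rpow_mul, one_div_mul_cancel hp0.ne', one_div,
              inv_mul_eq_div, hpq.div_conj_eq_sub_one, ENNReal.rpow_one]
        _ = ENNReal.ofReal ((p/κ) ^ (p-1)) * ENNReal.ofReal (Real.exp (-((p-1) * β * t))) * A := by
            have hreal : (Real.exp (-(β * t)) / β) ^ (p-1) =
                (p/κ) ^ (p-1) * Real.exp (-((p-1) * β * t)) := by
              rw [Real.div_rpow (Real.exp_pos _).le hβ0.le, ← Real.exp_mul]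
              have he : -(β*t) * (p-1) = -((p-1) * β * t) := by ring
              rw [he, div_eq_mul_inv, ← Real.inv_rpow hβ0.le, hβinv]
              ring
            rw [hBdef, ENNReal.ofReal_rpow_of_nonneg (by positivity) (by linarith), hreal,
              ENNReal.ofReal_mul (by positivity), mul_comm]
  -- main chain
  set C1 : ℝ≥0∞ := ENNReal.ofReal ((p/κ) ^ (p-1)) with hC1def
  set H : ℝ → ℝ≥0∞ := fun s =>
    (ENNReal.ofReal |g s|) ^ p * ENNReal.ofReal (Real.exp ((p-1) * β * s)) with hHdef
  set w : ℝ → ℝ≥0∞ := fun t => ENNReal.ofReal (Real.exp (β * t)) with hwdef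
  have hH : Measurable H :=
    ((ENNReal.measurable_ofReal.comp hg.abs).pow measurable_const).mul
      (ENNReal.measurable_ofReal.comp (by fun_prop))
  have hw : Measurable w := ENNReal.measurable_ofReal.comp (by fun_prop)
  have hEw : ∀ t : ℝ, ENNReal.ofReal (Real.exp (-((p-1) * β * t))) *
      ENNReal.ofReal (Real.exp (κ * t)) = w t := by
    intro t
    rw [hwdef, ← ENNReal.ofReal_mul (Real.exp_pos _).le, ← Real.exp_add]
    congr 2
    rw [← hpβ]; ring
  have hpoint : ∀ s : ℝ, C1 * (H s * ENNReal.ofReal (Real.exp (β * s) / β)) =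
      ENNReal.ofReal ((p/κ) ^ p) * ENNReal.ofReal (|g s| ^ p * Real.exp (κ * s)) := by
    intro s
    have hgp : (ENNReal.ofReal |g s|) ^ p = ENNReal.ofReal (|g s| ^ p) :=
      ENNReal.ofReal_rpow_of_nonneg (abs_nonneg _) hp0.le
    have hr : (p/κ) ^ (p-1) * ((|g s| ^ p * Real.exp ((p-1) * β * s)) *
        (Real.exp (β * s) / β)) = (p/κ) ^ p * (|g s| ^ p * Real.exp (κ * s)) := by
      have h2 : (p/κ) ^ (p-1) * (p/κ) = (p/κ) ^ p := by
        nth_rewrite 2 [← Real.rpow_one (p/κ)]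
        rw [← Real.rpow_add (div_pos hp0 hκ), sub_add_cancel]
      have h1 : (p-1) * β * s + β * s = κ * s := by rw [← hpβ]; ring
      calc (p/κ) ^ (p-1) * ((|g s| ^ p * Real.exp ((p-1) * β * s)) * (Real.exp (β * s) / β))
          = ((p/κ) ^ (p-1) * β⁻¹) * (|g s| ^ p *
              (Real.exp ((p-1) * β * s) * Real.exp (β * s))) := by ring
        _ = (p/κ) ^ p * (|g s| ^ p * Real.exp (κ * s)) := by
            rw [hβinv, h2, ← Real.exp_add, h1]
    rw [hHdef, hC1def]
    simp only []
    rw [hgp, ← ENNReal.ofReal_mul (by positivity), ← ENNReal.ofReal_mul (by positivity),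
      ← ENNReal.ofReal_mul (by positivity), hr, ENNReal.ofReal_mul (by positivity)]
  calc (∫⁻ t in Set.Ioi (0 : ℝ), ENNReal.ofReal (|f t| ^ p * Real.exp (κ * t)))
      = ∫⁻ t in Ioi (0:ℝ), (ENNReal.ofReal |f t|) ^ p * ENNReal.ofReal (Real.exp (κ * t)) := by
        refine lintegral_congr fun t => ?_
        rw [ENNReal.ofReal_rpow_of_nonneg (abs_nonneg (f t)) hp0.le,
          ← ENNReal.ofReal_mul (Real.rpow_nonneg (abs_nonneg _) p)]
    _ ≤ ∫⁻ t in Ioi (0:ℝ), (C1 * ENNReal.ofReal (Real.exp (-((p-1) * β * t))) *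
          ∫⁻ s in Ioi t, H s) * ENNReal.ofReal (Real.exp (κ * t)) := by
        refine lintegral_mono_ae ?_
        filter_upwards [ae_restrict_mem measurableSet_Ioi] with t ht
        exact mul_le_mul_left (claimA t ht) _
    _ = ∫⁻ t in Ioi (0:ℝ), C1 * (w t * ∫⁻ s in Ioi t, H s) := by
        refine lintegral_congr fun t => ?_
        rw [← hEw t]; ring
    _ = C1 * ∫⁻ t in Ioi (0:ℝ), w t * ∫⁻ s in Ioi t, H s :=
        lintegral_const_mul' _ _ ENNReal.ofReal_ne_top
    _ = C1 * ∫⁻ s, H s * ∫⁻ t in Ioo 0 s, w t := by rw [aux_swap H w hH hw]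
    _ = C1 * ∫⁻ s in Ioi (0:ℝ), H s * ∫⁻ t in Ioo 0 s, w t := by
        congr 1
        rw [← lintegral_indicator measurableSet_Ioi]
        refine lintegral_congr fun s => ?_
        by_cases hs : s ∈ Ioi (0:ℝ)
        · simp [hs]
        · have h1 : Ioo (0:ℝ) s = ∅ := Ioo_eq_empty (by simpa using hs)
          simp [hs, h1]
    _ ≤ C1 * ∫⁻ s in Ioi (0:ℝ), H s * ENNReal.ofReal (Real.exp (β * s) / β) := by
        refine mul_le_mul_right (lintegral_mono_ae ?_) _
        filter_upwards [ae_restrict_mem measurableSet_Ioi] with s hs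
        exact mul_le_mul_right (aux_exp_Ioo hβ0 hs) _
    _ = ENNReal.ofReal ((p/κ) ^ p) *
          ∫⁻ s in Ioi (0:ℝ), ENNReal.ofReal (|g s| ^ p * Real.exp (κ * s)) := by
        rw [← lintegral_const_mul' _ _ ENNReal.ofReal_ne_top,
          ← lintegral_const_mul' _ _ ENNReal.ofReal_ne_top]
        exact lintegral_congr hpoint
    _ = ENNReal.ofReal ((p/κ) ^ p) *
          ∫⁻ t in Set.Ioi (0:ℝ), ENNReal.ofReal (|f' t| ^ p * Real.exp (κ * t)) := by
        congr 1
        refine lintegral_congr_ae ?_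
        filter_upwards [hfg] with s hs
        rw [← hs]
end
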